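/- arXiv:1502.07922 — 2 statements merged into one kernel-verified Lean document; each statement's English description precedes it below -/
import Mathlib

section
/- Let K be a field of characteristic 2 and consider the Ginzburg DG-algebra G_{D_4} = (T, d) for the D_4 tree (vertices 1,2,3,4, central vertex 3), and let d_3 be the degree +1 k-linear derivation of T vanishing on all generators except d_3(c_3) = −c_{31}c_{13}c_{32}c_{23}. Then there is no k-linear derivation φ of T which preserves total degree, raises word length by exactly 2, and satisfies d_3 = d∘φ − φ∘d. (Consequently the obstruction class [d̃_3] ∈ HH²(G_{D_4}, G_{D_4}[−2]) is nonzero in characteristic 2.) -/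
/-- Adjacency of the `D_n` tree with vertices `1, …, n` and edges
`{1,3}, {2,3}, {3,4}, {4,5}, …, {n−1,n}`. -/
def DnAdj (n i j : ℕ) : Prop :=
  (i = 1 ∧ j = 3) ∨ (i = 3 ∧ j = 1) ∨ (i = 2 ∧ j = 3) ∨ (i = 3 ∧ j = 2) ∨
  (3 ≤ i ∧ j = i + 1 ∧ j ≤ n) ∨ (3 ≤ j ∧ i = j + 1 ∧ i ≤ n)

/-- The bigraded tensor algebra `T` over `k = ⊕_{i=1}^n K e_i` on generators `c i j` in
degree `0` (one for each ordered adjacent pair of the `D_n` tree, with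
`c i j ∈ e i ⬝ T ⬝ e j`) and generators `ℓ i` in degree `−1` (one for each vertex), which
underlies both the Chekanov–Eliashberg DG-algebra `B_n` of `Λ_{D_n}` and the Ginzburg
DG-algebra `G_{D_n}`.  The field `g` is the cohomological (Conley–Zehnder/total)
`ℤ`-grading and `w` is the word-length `ℕ`-grading; `free` is the universal property of
the tensor algebra over `k`, pinning `T` down up to isomorphism. -/
structure DnPres (K : Type) [Field K] (n : ℕ) : Type 1 where
  T : Type
  [ringT : Ring T]
  [algT : Algebra K T]
  e : ℕ → T
  c : ℕ → ℕ → T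
  l : ℕ → T
  g : ℤ → Submodule K T
  w : ℕ → Submodule K T
  e_zero : ∀ i, ¬ (1 ≤ i ∧ i ≤ n) → e i = 0
  c_zero : ∀ i j, ¬ DnAdj n i j → c i j = 0
  l_zero : ∀ i, ¬ (1 ≤ i ∧ i ≤ n) → l i = 0
  idem : ∀ i, e i * e i = e i
  orth : ∀ i j, i ≠ j → e i * e j = 0
  sum_one : ∑ i ∈ Finset.Icc 1 n, e i = 1
  c_comp : ∀ i j, e i * c i j = c i j ∧ c i j * e j = c i j
  l_comp : ∀ i, e i * l i = l i ∧ l i * e i = l i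
  g_internal : DirectSum.IsInternal g
  g_one : (1 : T) ∈ g 0
  g_mul : ∀ (d₁ d₂ : ℤ) (x y : T), x ∈ g d₁ → y ∈ g d₂ → x * y ∈ g (d₁ + d₂)
  w_internal : DirectSum.IsInternal w
  w_one : (1 : T) ∈ w 0
  w_mul : ∀ (d₁ d₂ : ℕ) (x y : T), x ∈ w d₁ → y ∈ w d₂ → x * y ∈ w (d₁ + d₂)
  e_g : ∀ i, e i ∈ g 0
  c_g : ∀ i j, c i j ∈ g 0
  l_g : ∀ i, l i ∈ g (-1)
  e_w : ∀ i, e i ∈ w 0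
  c_w : ∀ i j, c i j ∈ w 1
  l_w : ∀ i, l i ∈ w 1
  free : ∀ (S : Type) [Ring S] [Algebra K S] (ε : ℕ → S) (γ : ℕ → ℕ → S) (δ : ℕ → S),
    (∀ i, ¬ (1 ≤ i ∧ i ≤ n) → ε i = 0) →
    (∀ i j, ¬ DnAdj n i j → γ i j = 0) →
    (∀ i, ¬ (1 ≤ i ∧ i ≤ n) → δ i = 0) →
    (∀ i, ε i * ε i = ε i) →
    (∀ i j, i ≠ j → ε i * ε j = 0) →
    (∑ i ∈ Finset.Icc 1 n, ε i = 1) →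
    (∀ i j, ε i * γ i j = γ i j ∧ γ i j * ε j = γ i j) →
    (∀ i, ε i * δ i = δ i ∧ δ i * ε i = δ i) →
    ∃! f : T →ₐ[K] S, (∀ i, f (e i) = ε i) ∧ (∀ i j, f (c i j) = γ i j) ∧
      (∀ i, f (l i) = δ i)

attribute [instance] DnPres.ringT DnPres.algT

/-- The Koszul sign `(−1)^d` for `d : ℤ`, as an integer. -/
def negOneZ (d : ℤ) : ℤ := (-1) ^ d.natAbs

/-- `IsDnDiff P D q` asserts that `D` is the differential of the Chekanov–Eliashberg
DG-algebra of `Λ_{D_n}` when `q = 1`, and of the Ginzburg DG-algebra of the `D_n` quiver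
when `q = 0`: a square-zero degree `+1` graded `K`-linear derivation with `D e = 0`,
`D c = 0`, the listed values on the generators `ℓ i`, and the quartic term
`− c_{31}c_{13}c_{32}c_{23}` in `D ℓ₃` scaled by `q`. -/
def IsDnDiff {K : Type} [Field K] {n : ℕ} (P : DnPres K n)
    (D : P.T →ₗ[K] P.T) (q : K) : Prop :=
  (∀ x, D (D x) = 0) ∧
  (∀ (d : ℤ) (x : P.T), x ∈ P.g d → D x ∈ P.g (d + 1)) ∧
  (∀ (d : ℤ) (x : P.T), x ∈ P.g d → ∀ y : P.T,
    D (x * y) = D x * y + negOneZ d • (x * D y)) ∧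
  (∀ i, D (P.e i) = 0) ∧
  (∀ i j, D (P.c i j) = 0) ∧
  D (P.l 1) = P.c 1 3 * P.c 3 1 ∧
  D (P.l 2) = P.c 2 3 * P.c 3 2 ∧
  D (P.l 3) = -(P.c 3 1 * P.c 1 3) - P.c 3 2 * P.c 2 3 + P.c 3 4 * P.c 4 3
      - q • (P.c 3 1 * P.c 1 3 * P.c 3 2 * P.c 2 3) ∧
  (∀ i, 4 ≤ i → i + 1 ≤ n →
    D (P.l i) = -(P.c i (i-1) * P.c (i-1) i) + P.c i (i+1) * P.c (i+1) i) ∧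
  D (P.l n) = -(P.c n (n-1) * P.c (n-1) n)

/-- The decreasing word-length filtration `F^p ⊆ T`: the span of the graded pieces of
word length at least `p`. -/
def wFiltr {K : Type} [Field K] {n : ℕ} (P : DnPres K n) (p : ℕ) : Submodule K P.T :=
  ⨆ (q : ℕ) (_ : p ≤ q), P.w q

namespace St2

inductive Ltr : Type
  | c : ℕ → ℕ → Ltr
  | l : ℕ → Ltr
  deriving DecidableEq

def src : Ltr → ℕ | .c i _ => i | .l i => i
def tgt : Ltr → ℕ | .c _ j => j | .l i => i

instance DnAdj.dec (n i j : ℕ) : Decidable (DnAdj n i j) := by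
  unfold DnAdj; infer_instance

def okL : Ltr → Prop | .c i j => DnAdj 4 i j | .l i => 1 ≤ i ∧ i ≤ 4

instance : DecidablePred okL := fun a => by cases a <;> (dsimp [okL]; infer_instance)

lemma okL_src {a : Ltr} (h : okL a) : 1 ≤ src a ∧ src a ≤ 4 := by
  cases a with
  | c i j => dsimp [src]; unfold okL DnAdj at h; omega
  | l i => exact h

lemma okL_tgt {a : Ltr} (h : okL a) : 1 ≤ tgt a ∧ tgt a ≤ 4 := by
  cases a with
  | c i j => dsimp [tgt]; unfold okL DnAdj at h; omega
  | l i => exact h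

lemma adj4 {i j : ℕ} (h : DnAdj 4 i j) :
    (i=1∧j=3)∨(i=3∧j=1)∨(i=2∧j=3)∨(i=3∧j=2)∨(i=3∧j=4)∨(i=4∧j=3) := by
  unfold DnAdj at h; omega

abbrev W : Type := {p : ℕ × List Ltr // 1 ≤ p.1 ∧ p.1 ≤ 4}

instance : DecidableEq W := by unfold W; infer_instance

variable (K : Type) [Field K]

abbrev M := W →₀ K

noncomputable def opE (i : ℕ) : M K →ₗ[K] M K :=
  Finsupp.lsum K fun w =>
    if w.1.1 = i then LinearMap.toSpanSingleton K (M K) (Finsupp.single w 1) else 0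

noncomputable def opA (a : Ltr) : M K →ₗ[K] M K :=
  Finsupp.lsum K fun w =>
    if h : okL a ∧ tgt a = w.1.1 then
      LinearMap.toSpanSingleton K (M K) (Finsupp.single ⟨(src a, a :: w.1.2), okL_src h.1⟩ 1)
    else 0

lemma opE_single (i : ℕ) (w : W) (b : K) :
    opE K i (Finsupp.single w b) = if w.1.1 = i then Finsupp.single w b else 0 := by
  rw [opE, Finsupp.lsum_single]
  split_ifs with h
  · simp [LinearMap.toSpanSingleton_apply, Finsupp.smul_single]
  · simp

lemma opA_single (a : Ltr) (w : W) (b : K) :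
    opA K a (Finsupp.single w b) =
      if h : okL a ∧ tgt a = w.1.1 then
        Finsupp.single (⟨(src a, a :: w.1.2), okL_src h.1⟩ : W) b else 0 := by
  rw [opA, Finsupp.lsum_single]
  split_ifs with h
  · simp [LinearMap.toSpanSingleton_apply, Finsupp.smul_single]
  · simp

end St2
namespace St2
variable (K : Type) [Field K]

abbrev S := Module.End K (M K)

noncomputable def εop (i : ℕ) : S K := opE K i
noncomputable def γop (i j : ℕ) : S K := opA K (Ltr.c i j)
noncomputable def δop (i : ℕ) : S K := opA K (Ltr.l i)

lemma ext_single {f g : S K} (h : ∀ w b, f (Finsupp.single w b) = g (Finsupp.single w b)) :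
    f = g := Finsupp.lhom_ext' fun w => LinearMap.ext fun b => h w b

lemma εop_zero (i : ℕ) (h : ¬ (1 ≤ i ∧ i ≤ 4)) : εop K i = 0 := by
  apply ext_single; intro w b
  rw [εop, opE_single]
  rw [if_neg]; · simp
  · intro hw; exact h (hw ▸ w.2)

lemma γop_zero (i j : ℕ) (h : ¬ DnAdj 4 i j) : γop K i j = 0 := by
  apply ext_single; intro w b
  rw [γop, opA_single]
  rw [dif_neg]; · simp
  · rintro ⟨h1, -⟩; exact h h1

lemma δop_zero (i : ℕ) (h : ¬ (1 ≤ i ∧ i ≤ 4)) : δop K i = 0 := by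
  apply ext_single; intro w b
  rw [δop, opA_single]
  rw [dif_neg]; · simp
  · rintro ⟨h1, -⟩; exact h h1

lemma εop_idem (i : ℕ) : εop K i * εop K i = εop K i := by
  apply ext_single; intro w b
  rw [Module.End.mul_apply, εop, opE_single]
  split_ifs with h
  · rw [opE_single, if_pos h]
  · simp

lemma εop_orth (i j : ℕ) (h : i ≠ j) : εop K i * εop K j = 0 := by
  apply ext_single; intro w b
  rw [Module.End.mul_apply]
  rw [show εop K j (Finsupp.single w b) = _ from opE_single K j w b]
  split_ifs with h2
  · rw [show εop K i (Finsupp.single w b) = _ from opE_single K i w b,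
      if_neg (by rw [h2]; exact h.symm)]
    simp
  · simp

lemma εop_sum : ∑ i ∈ Finset.Icc 1 4, εop K i = 1 := by
  apply ext_single; intro w b
  rw [LinearMap.sum_apply]
  have : ∀ i ∈ Finset.Icc 1 4, εop K i (Finsupp.single w b)
      = if w.1.1 = i then Finsupp.single w b else 0 := fun i _ => opE_single K i w b
  rw [Finset.sum_congr rfl this, Finset.sum_ite_eq (Finset.Icc 1 4) w.1.1
    (fun _ => Finsupp.single w b), if_pos (Finset.mem_Icc.2 w.2)]
  simp

lemma εγ (i j : ℕ) : εop K i * γop K i j = γop K i j := by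
  apply ext_single; intro w b
  rw [Module.End.mul_apply]
  rw [show γop K i j (Finsupp.single w b) = _ from opA_single K _ w b]
  split_ifs with h
  · rw [show ∀ u c, εop K i (Finsupp.single u c) = _ from fun u c => opE_single K i u c]
    rw [if_pos (by simp [src])]
  · simp

lemma γε (i j : ℕ) : γop K i j * εop K j = γop K i j := by
  apply ext_single; intro w b
  rw [Module.End.mul_apply]
  rw [show εop K j (Finsupp.single w b) = _ from opE_single K j w b]
  split_ifs with h
  · rfl
  · rw [map_zero]
    rw [show γop K i j (Finsupp.single w b) = _ from opA_single K _ w b, dif_neg]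
    rintro ⟨-, h2⟩; exact h (by simpa [tgt] using h2.symm)

lemma εδ (i : ℕ) : εop K i * δop K i = δop K i := by
  apply ext_single; intro w b
  rw [Module.End.mul_apply]
  rw [show δop K i (Finsupp.single w b) = _ from opA_single K _ w b]
  split_ifs with h
  · rw [show ∀ u c, εop K i (Finsupp.single u c) = _ from fun u c => opE_single K i u c]
    rw [if_pos (by simp [src])]
  · simp

lemma δε (i : ℕ) : δop K i * εop K i = δop K i := by
  apply ext_single; intro w b
  rw [Module.End.mul_apply]
  rw [show εop K i (Finsupp.single w b) = _ from opE_single K i w b]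
  split_ifs with h
  · rfl
  · rw [map_zero]
    rw [show δop K i (Finsupp.single w b) = _ from opA_single K _ w b, dif_neg]
    rintro ⟨-, h2⟩; exact h (by simpa [tgt] using h2.symm)

end St2
namespace St2
variable {K : Type} [Field K] (P : DnPres K 4)

def genT : Ltr → P.T
  | .c i j => P.c i j
  | .l i => P.l i

def prodL : List Ltr → P.T
  | [] => 1
  | a :: L => genT P a * prodL L

def ιw (w : W) : P.T := P.e w.1.1 * prodL P w.1.2

def okW : ℕ → List Ltr → Prop
  | _, [] => True
  | v, a :: L => okL a ∧ src a = v ∧ okW (tgt a) L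

instance : ∀ v L, Decidable (okW v L)
  | _, [] => .isTrue trivial
  | v, a :: L => by
      have := instDecidableOkW (tgt a) L
      dsimp [okW]; infer_instance

def endV : ℕ → List Ltr → ℕ
  | v, [] => v
  | _, a :: L => endV (tgt a) L

def nl : List Ltr → ℕ
  | [] => 0
  | .l _ :: L => nl L + 1
  | .c _ _ :: L => nl L

def okC (w : W) : Prop := okW w.1.1 w.1.2

instance : DecidablePred (okC) := fun w => by unfold okC; infer_instance

lemma genT_g (a : Ltr) : genT P a ∈ P.g (-(if a matches .l _ then 1 else 0) : ℤ) := by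
  cases a with
  | c i j => exact P.c_g i j
  | l i => exact P.l_g i

lemma prodL_g (L : List Ltr) : prodL P L ∈ P.g (-(nl L : ℤ)) := by
  induction L with
  | nil => exact P.g_one
  | cons a L ih =>
      have h := P.g_mul _ _ _ _ (genT_g P a) ih
      cases a with
      | c i j =>
          simpa [nl, prodL] using h
      | l i =>
          have : (-(if Ltr.l i matches .l _ then 1 else 0) : ℤ) + (-(nl L : ℤ))
              = -(nl (Ltr.l i :: L) : ℤ) := by push_cast [nl]; norm_num
          rw [this] at h; exact h

lemma prodL_w (L : List Ltr) : prodL P L ∈ P.w L.length := by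
  induction L with
  | nil => exact P.w_one
  | cons a L ih =>
      have hg : genT P a ∈ P.w 1 := by
        cases a with
        | c i j => exact P.c_w i j
        | l i => exact P.l_w i
      simpa [prodL, List.length_cons, Nat.add_comm 1 L.length] using P.w_mul _ _ _ _ hg ih

lemma ιw_g (w : W) : ιw P w ∈ P.g (-(nl w.1.2 : ℤ)) := by
  have := P.g_mul 0 _ _ _ (P.e_g w.1.1) (prodL_g P w.1.2)
  simpa [ιw] using this

lemma ιw_w (w : W) : ιw P w ∈ P.w w.1.2.length := by
  have := P.w_mul 0 _ _ _ (P.e_w w.1.1) (prodL_w P w.1.2)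
  simpa [ιw] using this

lemma e_genT (a : Ltr) : P.e (src a) * genT P a = genT P a := by
  cases a with
  | c i j => exact (P.c_comp i j).1
  | l i => exact (P.l_comp i).1

lemma genT_e (a : Ltr) : genT P a * P.e (tgt a) = genT P a := by
  cases a with
  | c i j => exact (P.c_comp i j).2
  | l i => exact (P.l_comp i).2

lemma ι_cons (a : Ltr) (L : List Ltr) (v : ℕ) (h1 : 1 ≤ v ∧ v ≤ 4) (hs : src a = v)
    (h2 : 1 ≤ tgt a ∧ tgt a ≤ 4) :
    ιw P ⟨(v, a :: L), h1⟩ = genT P a * ιw P ⟨(tgt a, L), h2⟩ := by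
  unfold ιw
  dsimp
  rw [prodL, ← mul_assoc, ← hs, e_genT, ← mul_assoc, genT_e]

lemma ιw_mul_e (w : W) (hw : okC w) (u : ℕ) :
    ιw P w * P.e u = if u = endV w.1.1 w.1.2 then ιw P w else 0 := by
  obtain ⟨⟨v, L⟩, hv⟩ := w
  induction L generalizing v with
  | nil =>
      unfold ιw; dsimp [endV, prodL]
      rw [mul_one]
      split_ifs with h
      · rw [h, P.idem]; exact (if_pos rfl).symm
      · rw [P.orth _ _ fun hh => h hh.symm]; exact (if_neg h).symm
  | cons a L ih =>
      obtain ⟨ha, hs, hrest⟩ := hw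
      rw [ι_cons P a L v hv hs (okL_tgt ha)]
      rw [mul_assoc, ih (tgt a) (okL_tgt ha) hrest]
      dsimp [endV]
      split_ifs with h
      · exact (if_pos h).symm
      · rw [mul_zero]; exact (if_neg h).symm

lemma okW_append {L L' : List Ltr} {v : ℕ} (h : okW v L) (h' : okW (endV v L) L') :
    okW v (L ++ L') := by
  induction L generalizing v with
  | nil => exact h'
  | cons a L ih =>
      obtain ⟨ha, hs, hrest⟩ := h
      exact ⟨ha, hs, ih hrest h'⟩

lemma endV_append (L L' : List Ltr) (v : ℕ) :
    endV v (L ++ L') = endV (endV v L) L' := by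
  induction L generalizing v with
  | nil => rfl
  | cons a L ih => exact ih (tgt a)

lemma ι_mul (w w' : W) (hw : okC w) (hw' : okC w') :
    ιw P w * ιw P w' =
      if h : w'.1.1 = endV w.1.1 w.1.2 then
        ιw P ⟨(w.1.1, w.1.2 ++ w'.1.2), w.2⟩ else 0 := by
  obtain ⟨⟨v, L⟩, hv⟩ := w
  obtain ⟨⟨v', L'⟩, hv'⟩ := w'
  induction L generalizing v with
  | nil =>
      unfold ιw at *
      dsimp [endV, prodL] at *
      rw [mul_one, ← mul_assoc]
      split_ifs with h
      · subst h; rw [P.idem]; symm; exact dif_pos rfl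
      · rw [P.orth _ _ fun hh => h hh.symm, zero_mul]; symm; exact dif_neg h
  | cons a L ih =>
      obtain ⟨ha, hs, hrest⟩ := hw
      rw [ι_cons P a L v hv hs (okL_tgt ha), mul_assoc,
        ih (tgt a) (okL_tgt ha) hrest]
      dsimp [endV]
      split_ifs with h
      · rw [← ι_cons P a (L ++ L') v hv hs (okL_tgt ha)]; symm; exact dif_pos h
      · rw [mul_zero]; symm; exact dif_neg h

end St2
namespace St2
variable {K : Type} [Field K] (P : DnPres K 4)

/-- generic regrouping lemma -/
lemma regroup {T : Type} [AddCommGroup T] [Module K T] {ι : Type} {g : ι → Submodule K T}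
    (hind : iSupIndep g) (S : ι → Set T) (hS : ∀ d, S d ⊆ (g d : Set T))
    {x : T} (m : ι) (hm : x ∈ g m) (hx : x ∈ Submodule.span K (⋃ d, S d)) :
    x ∈ Submodule.span K (S m) := by
  rw [Submodule.span_iUnion] at hx
  have hsplit : (⨆ d, Submodule.span K (S d)) ≤
      Submodule.span K (S m) ⊔ ⨆ d, ⨆ _ : d ≠ m, Submodule.span K (S d) := by
    refine iSup_le fun d => ?_
    by_cases h : d = m
    · subst h; exact le_sup_left
    · exact le_sup_of_le_right (le_iSup_of_le d (le_iSup_of_le h le_rfl))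
  obtain ⟨y, hy, z, hz, rfl⟩ := Submodule.mem_sup.1 (hsplit hx)
  have hle : (⨆ d, ⨆ _ : d ≠ m, Submodule.span K (S d)) ≤ ⨆ d, ⨆ _ : d ≠ m, g d :=
    iSup_mono fun d => iSup_mono fun _ => Submodule.span_le.2 (hS d)
  have hzg : z ∈ ⨆ d, ⨆ _ : d ≠ m, g d := hle hz
  have hyg : y ∈ g m := Submodule.span_le.2 (hS m) hy
  have hzm : z ∈ g m := by
    have : z = (y + z) - y := (add_sub_cancel_left y z).symm
    rw [this]; exact Submodule.sub_mem _ hm hyg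
  have : z = 0 := by
    have hd := hind m
    exact (Submodule.disjoint_def.1 hd) z hzm hzg
  rw [this, add_zero]; exact hy

def ValidSet : Set P.T := {t | ∃ w : W, okC w ∧ ιw P w = t}

def SpanW : Submodule K P.T := Submodule.span K (ValidSet P)

lemma e_mem_spanW (i : ℕ) : P.e i ∈ SpanW P := by
  by_cases h : 1 ≤ i ∧ i ≤ 4
  · exact Submodule.subset_span ⟨⟨(i, []), h⟩, trivial, by simp [ιw, prodL]⟩
  · rw [P.e_zero i h]; exact Submodule.zero_mem _
lemma c_mem_spanW (i j : ℕ) : P.c i j ∈ SpanW P := by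
  by_cases h : DnAdj 4 i j
  · refine Submodule.subset_span ⟨⟨(i, [Ltr.c i j]), ?_⟩, ⟨h, rfl, trivial⟩, ?_⟩
    · have := okL_src (a := Ltr.c i j) h; exact this
    · simp [ιw, prodL, genT, (P.c_comp i j).1]
  · rw [P.c_zero i j h]; exact Submodule.zero_mem _
lemma l_mem_spanW (i : ℕ) : P.l i ∈ SpanW P := by
  by_cases h : 1 ≤ i ∧ i ≤ 4
  · refine Submodule.subset_span ⟨⟨(i, [Ltr.l i]), h⟩, ⟨h, rfl, trivial⟩, ?_⟩
    simp [ιw, prodL, genT, (P.l_comp i).1]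
  · rw [P.l_zero i h]; exact Submodule.zero_mem _

lemma one_mem_spanW : (1 : P.T) ∈ SpanW P := by
  rw [← P.sum_one]
  exact Submodule.sum_mem _ fun i _ => e_mem_spanW P i

lemma mul_mem_spanW : ∀ x y : P.T, x ∈ SpanW P → y ∈ SpanW P → x * y ∈ SpanW P := by
  intro x y hx hy
  induction hx using Submodule.span_induction generalizing y with
  | mem a ha =>
      induction hy using Submodule.span_induction with
      | mem b hb =>
          obtain ⟨w, hw, rfl⟩ := ha
          obtain ⟨w', hw', rfl⟩ := hb
          rw [ι_mul P w w' hw hw']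
          split_ifs with h
          · refine Submodule.subset_span ⟨⟨(w.1.1, w.1.2 ++ w'.1.2), w.2⟩, ?_, rfl⟩
            exact okW_append hw
              (show okW (endV w.1.1 w.1.2) w'.1.2 from h ▸ (hw' : okW w'.1.1 w'.1.2))
          · exact Submodule.zero_mem _
      | zero => rw [mul_zero]; exact Submodule.zero_mem _
      | add u v _ _ h1 h2 => rw [mul_add]; exact Submodule.add_mem _ h1 h2
      | smul c u _ h1 => rw [mul_smul_comm]; exact Submodule.smul_mem _ c h1
  | zero => rw [zero_mul]; exact Submodule.zero_mem _
  | add u v _ _ h1 h2 =>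
      rw [add_mul]; exact Submodule.add_mem _ (h1 y hy) (h2 y hy)
  | smul c u _ h1 => rw [smul_mul_assoc]; exact Submodule.smul_mem _ c (h1 y hy)

noncomputable def SpanWA : Subalgebra K P.T :=
  (SpanW P).toSubalgebra (one_mem_spanW P) (mul_mem_spanW P)

lemma spanW_top : SpanW P = ⊤ := by
  obtain ⟨j, hj, hjuniq⟩ := P.free P.T P.e P.c P.l P.e_zero P.c_zero P.l_zero
    P.idem P.orth P.sum_one P.c_comp P.l_comp
  have hid : (AlgHom.id K P.T) = j := hjuniq _ ⟨fun _ => rfl, fun _ _ => rfl, fun _ => rfl⟩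
  obtain ⟨f₀, ⟨h1, h2, h3⟩, -⟩ := P.free (SpanWA P) (fun i => ⟨P.e i, e_mem_spanW P i⟩)
    (fun i j => ⟨P.c i j, c_mem_spanW P i j⟩) (fun i => ⟨P.l i, l_mem_spanW P i⟩)
    (fun i h => Subtype.ext (P.e_zero i h))
    (fun i j h => Subtype.ext (P.c_zero i j h))
    (fun i h => Subtype.ext (P.l_zero i h))
    (fun i => Subtype.ext (P.idem i))
    (fun i j h => Subtype.ext (P.orth i j h))
    (Subtype.ext (by push_cast; exact P.sum_one))
    (fun i j => ⟨Subtype.ext (P.c_comp i j).1, Subtype.ext (P.c_comp i j).2⟩)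
    (fun i => ⟨Subtype.ext (P.l_comp i).1, Subtype.ext (P.l_comp i).2⟩)
  have hsub : (SpanWA P).val.comp f₀ = j := by
    apply hjuniq
    refine ⟨fun i => ?_, fun i j => ?_, fun i => ?_⟩
    · rw [AlgHom.comp_apply, h1 i]; rfl
    · rw [AlgHom.comp_apply, h2 i j]; rfl
    · rw [AlgHom.comp_apply, h3 i]; rfl
  rw [eq_top_iff]
  intro x _
  have hx : x = (SpanWA P).val.comp f₀ x := by rw [hsub, ← hid]; rfl
  rw [hx]
  exact (f₀ x).2

end St2
namespace St2
variable {K : Type} [Field K] (P : DnPres K 4)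

/-- every element homogeneous of bidegree (m,p) is in the span of valid words of that
bidegree -/
lemma mem_span_words {x : P.T} (m : ℤ) (p : ℕ) (hgm : x ∈ P.g m) (hwp : x ∈ P.w p) :
    x ∈ Submodule.span K
      (ιw P '' {w : W | okC w ∧ -(nl w.1.2 : ℤ) = m ∧ w.1.2.length = p}) := by
  have hx0 : x ∈ SpanW P := by rw [spanW_top]; trivial
  -- regroup by g
  have h1 : x ∈ Submodule.span K
      (⋃ d : ℤ, ιw P '' {w : W | okC w ∧ -(nl w.1.2 : ℤ) = d}) := by
    refine Submodule.span_mono ?_ hx0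
    rintro t ⟨w, hw, rfl⟩
    exact Set.mem_iUnion.2 ⟨-(nl w.1.2 : ℤ), ⟨w, ⟨hw, rfl⟩, rfl⟩⟩
  have h2 : x ∈ Submodule.span K (ιw P '' {w : W | okC w ∧ -(nl w.1.2 : ℤ) = m}) := by
    refine regroup P.g_internal.submodule_iSupIndep
      (fun d => ιw P '' {w : W | okC w ∧ -(nl w.1.2 : ℤ) = d}) ?_ m hgm h1
    rintro d t ⟨w, ⟨-, hd⟩, rfl⟩
    exact hd ▸ ιw_g P w
  -- regroup by w
  have h3 : x ∈ Submodule.span K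
      (⋃ q : ℕ, ιw P '' {w : W | (okC w ∧ -(nl w.1.2 : ℤ) = m) ∧ w.1.2.length = q}) := by
    refine Submodule.span_mono ?_ h2
    rintro t ⟨w, hw, rfl⟩
    exact Set.mem_iUnion.2 ⟨w.1.2.length, ⟨w, ⟨hw, rfl⟩, rfl⟩⟩
  have h4 := regroup P.w_internal.submodule_iSupIndep
    (fun q => ιw P '' {w : W | (okC w ∧ -(nl w.1.2 : ℤ) = m) ∧ w.1.2.length = q}) ?_ p hwp h3
  · refine Submodule.span_mono ?_ h4
    rintro t ⟨w, ⟨⟨h5, h6⟩, h7⟩, rfl⟩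
    exact ⟨w, ⟨h5, h6, h7⟩, rfl⟩
  · rintro q t ⟨w, ⟨-, hq⟩, rfl⟩
    exact hq ▸ ιw_w P w

lemma e_mul_ι (a : ℕ) (w : W) :
    P.e a * ιw P w = if a = w.1.1 then ιw P w else 0 := by
  unfold ιw
  rw [← mul_assoc]
  split_ifs with h
  · rw [h, P.idem]
  · rw [P.orth _ _ h, zero_mul]

lemma sandwich_span {A : Set W} (a b : ℕ) {x : P.T} (hA : ∀ w ∈ A, okC w)
    (hx : x ∈ Submodule.span K (ιw P '' A)) :
    P.e a * x * P.e b ∈ Submodule.span K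
      (ιw P '' {w : W | w ∈ A ∧ w.1.1 = a ∧ endV w.1.1 w.1.2 = b}) := by
  set lm : P.T →ₗ[K] P.T :=
    (LinearMap.mulLeft K (P.e a)).comp (LinearMap.mulRight K (P.e b)) with hlmdef
  have hlm : ∀ y : P.T, lm y = P.e a * y * P.e b := fun y => by
    simp [hlmdef, LinearMap.mulLeft_apply, LinearMap.mulRight_apply, mul_assoc]
  have h1 : lm x ∈ Submodule.map lm (Submodule.span K (ιw P '' A)) :=
    Submodule.mem_map_of_mem hx
  rw [Submodule.map_span] at h1
  rw [← hlm]
  refine Submodule.span_le.2 ?_ h1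
  rintro t ⟨s, ⟨w, hw, rfl⟩, rfl⟩
  have hstep : lm (ιw P w) = P.e a * (if b = endV w.1.1 w.1.2 then ιw P w else 0) := by
    rw [hlm, mul_assoc, ιw_mul_e P w (hA w hw) b]
  by_cases heb : b = endV w.1.1 w.1.2
  · rw [hstep, if_pos heb, e_mul_ι]
    split_ifs with hsa
    · exact Submodule.subset_span ⟨w, ⟨hw, hsa.symm, heb.symm⟩, rfl⟩
    · exact Submodule.zero_mem _
  · rw [hstep, if_neg heb, mul_zero]
    exact Submodule.zero_mem _

end St2
namespace St2
variable {K : Type} [Field K] (P : DnPres K 4)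

abbrev cx : Ltr := .c 3 1
abbrev cX : Ltr := .c 1 3
abbrev cy : Ltr := .c 3 2
abbrev cY : Ltr := .c 2 3
abbrev cz : Ltr := .c 3 4
abbrev cZ : Ltr := .c 4 3
abbrev l1 : Ltr := .l 1
abbrev l2 : Ltr := .l 2
abbrev l3 : Ltr := .l 3
abbrev l4 : Ltr := .l 4

def gens : List Ltr := [cx,cX,cy,cY,cz,cZ,l1,l2,l3,l4]

@[reducible] def wd (v : ℕ) (L : List Ltr) (h : 1 ≤ v ∧ v ≤ 4 := by decide) : W := ⟨(v,L),h⟩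

lemma okL_mem {a : Ltr} (h : okL a) : a ∈ gens := by
  cases a with
  | c i j =>
      rcases adj4 h with ⟨rfl,rfl⟩|⟨rfl,rfl⟩|⟨rfl,rfl⟩|⟨rfl,rfl⟩|⟨rfl,rfl⟩|⟨rfl,rfl⟩ <;> decide
  | l i =>
      obtain ⟨h1, h2⟩ := h
      interval_cases i <;> decide

lemma decode {v : ℕ} {L : List Ltr} (hok : okW v L) (hlen : L.length = 3) :
    ∃ a b c, L = [a,b,c] ∧ a ∈ gens ∧ b ∈ gens ∧ c ∈ gens := by
  obtain ⟨a, b, c, rfl⟩ := List.length_eq_three.1 hlen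
  obtain ⟨ha, -, hb, -, hc, -⟩ := hok
  exact ⟨a, b, c, rfl, okL_mem ha, okL_mem hb, okL_mem hc⟩

lemma cls_0_3_1 : ∀ p ∈ gens, ∀ q ∈ gens, ∀ r ∈ gens, okW 3 [p,q,r] → nl [p,q,r] = 0 →
    endV 3 [p,q,r] = 1 → ([p,q,r] = [cx,cX,cx] ∨ [p,q,r] = [cy,cY,cx] ∨ [p,q,r] = [cz,cZ,cx]) := by decide

lemma tgt_0_3_1 {x : P.T} (hg : x ∈ P.g (-(0:ℤ))) (hw : x ∈ P.w 3)
    (hx : P.e 3 * x * P.e 1 = x) :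
    x ∈ Submodule.span K ({ιw P (wd 3 [cx,cX,cx]), ιw P (wd 3 [cy,cY,cx]), ιw P (wd 3 [cz,cZ,cx])} : Set P.T) := by
  have h1 := mem_span_words P (-(0:ℤ)) 3 hg hw
  have h2 := sandwich_span P 3 1 (fun w hw => hw.1) h1
  rw [hx] at h2
  refine Submodule.span_mono ?_ h2
  rintro t ⟨⟨⟨v,L⟩,hv⟩, ⟨⟨hok, hnl, hlen⟩, hstart, hend⟩, rfl⟩
  dsimp at hok hnl hlen hstart hend
  subst hstart
  obtain ⟨p, q, r, rfl, hp, hq, hr⟩ := decode hok hlen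
  have hnl' : nl [p,q,r] = 0 := by omega
  rcases cls_0_3_1 p hp q hq r hr hok hnl' hend with h|h|h <;> rw [h] <;> simp [wd]

lemma cls_0_1_3 : ∀ p ∈ gens, ∀ q ∈ gens, ∀ r ∈ gens, okW 1 [p,q,r] → nl [p,q,r] = 0 →
    endV 1 [p,q,r] = 3 → ([p,q,r] = [cX,cx,cX] ∨ [p,q,r] = [cX,cy,cY] ∨ [p,q,r] = [cX,cz,cZ]) := by decide

lemma tgt_0_1_3 {x : P.T} (hg : x ∈ P.g (-(0:ℤ))) (hw : x ∈ P.w 3)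
    (hx : P.e 1 * x * P.e 3 = x) :
    x ∈ Submodule.span K ({ιw P (wd 1 [cX,cx,cX]), ιw P (wd 1 [cX,cy,cY]), ιw P (wd 1 [cX,cz,cZ])} : Set P.T) := by
  have h1 := mem_span_words P (-(0:ℤ)) 3 hg hw
  have h2 := sandwich_span P 1 3 (fun w hw => hw.1) h1
  rw [hx] at h2
  refine Submodule.span_mono ?_ h2
  rintro t ⟨⟨⟨v,L⟩,hv⟩, ⟨⟨hok, hnl, hlen⟩, hstart, hend⟩, rfl⟩
  dsimp at hok hnl hlen hstart hend
  subst hstart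
  obtain ⟨p, q, r, rfl, hp, hq, hr⟩ := decode hok hlen
  have hnl' : nl [p,q,r] = 0 := by omega
  rcases cls_0_1_3 p hp q hq r hr hok hnl' hend with h|h|h <;> rw [h] <;> simp [wd]

lemma cls_0_3_2 : ∀ p ∈ gens, ∀ q ∈ gens, ∀ r ∈ gens, okW 3 [p,q,r] → nl [p,q,r] = 0 →
    endV 3 [p,q,r] = 2 → ([p,q,r] = [cx,cX,cy] ∨ [p,q,r] = [cy,cY,cy] ∨ [p,q,r] = [cz,cZ,cy]) := by decide

lemma tgt_0_3_2 {x : P.T} (hg : x ∈ P.g (-(0:ℤ))) (hw : x ∈ P.w 3)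
    (hx : P.e 3 * x * P.e 2 = x) :
    x ∈ Submodule.span K ({ιw P (wd 3 [cx,cX,cy]), ιw P (wd 3 [cy,cY,cy]), ιw P (wd 3 [cz,cZ,cy])} : Set P.T) := by
  have h1 := mem_span_words P (-(0:ℤ)) 3 hg hw
  have h2 := sandwich_span P 3 2 (fun w hw => hw.1) h1
  rw [hx] at h2
  refine Submodule.span_mono ?_ h2
  rintro t ⟨⟨⟨v,L⟩,hv⟩, ⟨⟨hok, hnl, hlen⟩, hstart, hend⟩, rfl⟩
  dsimp at hok hnl hlen hstart hend
  subst hstart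
  obtain ⟨p, q, r, rfl, hp, hq, hr⟩ := decode hok hlen
  have hnl' : nl [p,q,r] = 0 := by omega
  rcases cls_0_3_2 p hp q hq r hr hok hnl' hend with h|h|h <;> rw [h] <;> simp [wd]

lemma cls_0_2_3 : ∀ p ∈ gens, ∀ q ∈ gens, ∀ r ∈ gens, okW 2 [p,q,r] → nl [p,q,r] = 0 →
    endV 2 [p,q,r] = 3 → ([p,q,r] = [cY,cx,cX] ∨ [p,q,r] = [cY,cy,cY] ∨ [p,q,r] = [cY,cz,cZ]) := by decide

lemma tgt_0_2_3 {x : P.T} (hg : x ∈ P.g (-(0:ℤ))) (hw : x ∈ P.w 3)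
    (hx : P.e 2 * x * P.e 3 = x) :
    x ∈ Submodule.span K ({ιw P (wd 2 [cY,cx,cX]), ιw P (wd 2 [cY,cy,cY]), ιw P (wd 2 [cY,cz,cZ])} : Set P.T) := by
  have h1 := mem_span_words P (-(0:ℤ)) 3 hg hw
  have h2 := sandwich_span P 2 3 (fun w hw => hw.1) h1
  rw [hx] at h2
  refine Submodule.span_mono ?_ h2
  rintro t ⟨⟨⟨v,L⟩,hv⟩, ⟨⟨hok, hnl, hlen⟩, hstart, hend⟩, rfl⟩
  dsimp at hok hnl hlen hstart hend
  subst hstart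
  obtain ⟨p, q, r, rfl, hp, hq, hr⟩ := decode hok hlen
  have hnl' : nl [p,q,r] = 0 := by omega
  rcases cls_0_2_3 p hp q hq r hr hok hnl' hend with h|h|h <;> rw [h] <;> simp [wd]

lemma cls_0_3_4 : ∀ p ∈ gens, ∀ q ∈ gens, ∀ r ∈ gens, okW 3 [p,q,r] → nl [p,q,r] = 0 →
    endV 3 [p,q,r] = 4 → ([p,q,r] = [cx,cX,cz] ∨ [p,q,r] = [cy,cY,cz] ∨ [p,q,r] = [cz,cZ,cz]) := by decide

lemma tgt_0_3_4 {x : P.T} (hg : x ∈ P.g (-(0:ℤ))) (hw : x ∈ P.w 3)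
    (hx : P.e 3 * x * P.e 4 = x) :
    x ∈ Submodule.span K ({ιw P (wd 3 [cx,cX,cz]), ιw P (wd 3 [cy,cY,cz]), ιw P (wd 3 [cz,cZ,cz])} : Set P.T) := by
  have h1 := mem_span_words P (-(0:ℤ)) 3 hg hw
  have h2 := sandwich_span P 3 4 (fun w hw => hw.1) h1
  rw [hx] at h2
  refine Submodule.span_mono ?_ h2
  rintro t ⟨⟨⟨v,L⟩,hv⟩, ⟨⟨hok, hnl, hlen⟩, hstart, hend⟩, rfl⟩
  dsimp at hok hnl hlen hstart hend
  subst hstart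
  obtain ⟨p, q, r, rfl, hp, hq, hr⟩ := decode hok hlen
  have hnl' : nl [p,q,r] = 0 := by omega
  rcases cls_0_3_4 p hp q hq r hr hok hnl' hend with h|h|h <;> rw [h] <;> simp [wd]

lemma cls_0_4_3 : ∀ p ∈ gens, ∀ q ∈ gens, ∀ r ∈ gens, okW 4 [p,q,r] → nl [p,q,r] = 0 →
    endV 4 [p,q,r] = 3 → ([p,q,r] = [cZ,cx,cX] ∨ [p,q,r] = [cZ,cy,cY] ∨ [p,q,r] = [cZ,cz,cZ]) := by decide

lemma tgt_0_4_3 {x : P.T} (hg : x ∈ P.g (-(0:ℤ))) (hw : x ∈ P.w 3)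
    (hx : P.e 4 * x * P.e 3 = x) :
    x ∈ Submodule.span K ({ιw P (wd 4 [cZ,cx,cX]), ιw P (wd 4 [cZ,cy,cY]), ιw P (wd 4 [cZ,cz,cZ])} : Set P.T) := by
  have h1 := mem_span_words P (-(0:ℤ)) 3 hg hw
  have h2 := sandwich_span P 4 3 (fun w hw => hw.1) h1
  rw [hx] at h2
  refine Submodule.span_mono ?_ h2
  rintro t ⟨⟨⟨v,L⟩,hv⟩, ⟨⟨hok, hnl, hlen⟩, hstart, hend⟩, rfl⟩
  dsimp at hok hnl hlen hstart hend
  subst hstart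
  obtain ⟨p, q, r, rfl, hp, hq, hr⟩ := decode hok hlen
  have hnl' : nl [p,q,r] = 0 := by omega
  rcases cls_0_4_3 p hp q hq r hr hok hnl' hend with h|h|h <;> rw [h] <;> simp [wd]

lemma cls_1_1_1 : ∀ p ∈ gens, ∀ q ∈ gens, ∀ r ∈ gens, okW 1 [p,q,r] → nl [p,q,r] = 1 →
    endV 1 [p,q,r] = 1 → ([p,q,r] = [l1,cX,cx] ∨ [p,q,r] = [cX,l3,cx] ∨ [p,q,r] = [cX,cx,l1]) := by decide

lemma tgt_1_1_1 {x : P.T} (hg : x ∈ P.g (-(1:ℤ))) (hw : x ∈ P.w 3)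
    (hx : P.e 1 * x * P.e 1 = x) :
    x ∈ Submodule.span K ({ιw P (wd 1 [l1,cX,cx]), ιw P (wd 1 [cX,l3,cx]), ιw P (wd 1 [cX,cx,l1])} : Set P.T) := by
  have h1 := mem_span_words P (-(1:ℤ)) 3 hg hw
  have h2 := sandwich_span P 1 1 (fun w hw => hw.1) h1
  rw [hx] at h2
  refine Submodule.span_mono ?_ h2
  rintro t ⟨⟨⟨v,L⟩,hv⟩, ⟨⟨hok, hnl, hlen⟩, hstart, hend⟩, rfl⟩
  dsimp at hok hnl hlen hstart hend
  subst hstart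
  obtain ⟨p, q, r, rfl, hp, hq, hr⟩ := decode hok hlen
  have hnl' : nl [p,q,r] = 1 := by omega
  rcases cls_1_1_1 p hp q hq r hr hok hnl' hend with h|h|h <;> rw [h] <;> simp [wd]

lemma cls_1_2_2 : ∀ p ∈ gens, ∀ q ∈ gens, ∀ r ∈ gens, okW 2 [p,q,r] → nl [p,q,r] = 1 →
    endV 2 [p,q,r] = 2 → ([p,q,r] = [l2,cY,cy] ∨ [p,q,r] = [cY,l3,cy] ∨ [p,q,r] = [cY,cy,l2]) := by decide

lemma tgt_1_2_2 {x : P.T} (hg : x ∈ P.g (-(1:ℤ))) (hw : x ∈ P.w 3)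
    (hx : P.e 2 * x * P.e 2 = x) :
    x ∈ Submodule.span K ({ιw P (wd 2 [l2,cY,cy]), ιw P (wd 2 [cY,l3,cy]), ιw P (wd 2 [cY,cy,l2])} : Set P.T) := by
  have h1 := mem_span_words P (-(1:ℤ)) 3 hg hw
  have h2 := sandwich_span P 2 2 (fun w hw => hw.1) h1
  rw [hx] at h2
  refine Submodule.span_mono ?_ h2
  rintro t ⟨⟨⟨v,L⟩,hv⟩, ⟨⟨hok, hnl, hlen⟩, hstart, hend⟩, rfl⟩
  dsimp at hok hnl hlen hstart hend
  subst hstart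
  obtain ⟨p, q, r, rfl, hp, hq, hr⟩ := decode hok hlen
  have hnl' : nl [p,q,r] = 1 := by omega
  rcases cls_1_2_2 p hp q hq r hr hok hnl' hend with h|h|h <;> rw [h] <;> simp [wd]

lemma cls_1_4_4 : ∀ p ∈ gens, ∀ q ∈ gens, ∀ r ∈ gens, okW 4 [p,q,r] → nl [p,q,r] = 1 →
    endV 4 [p,q,r] = 4 → ([p,q,r] = [l4,cZ,cz] ∨ [p,q,r] = [cZ,l3,cz] ∨ [p,q,r] = [cZ,cz,l4]) := by decide

lemma tgt_1_4_4 {x : P.T} (hg : x ∈ P.g (-(1:ℤ))) (hw : x ∈ P.w 3)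
    (hx : P.e 4 * x * P.e 4 = x) :
    x ∈ Submodule.span K ({ιw P (wd 4 [l4,cZ,cz]), ιw P (wd 4 [cZ,l3,cz]), ιw P (wd 4 [cZ,cz,l4])} : Set P.T) := by
  have h1 := mem_span_words P (-(1:ℤ)) 3 hg hw
  have h2 := sandwich_span P 4 4 (fun w hw => hw.1) h1
  rw [hx] at h2
  refine Submodule.span_mono ?_ h2
  rintro t ⟨⟨⟨v,L⟩,hv⟩, ⟨⟨hok, hnl, hlen⟩, hstart, hend⟩, rfl⟩
  dsimp at hok hnl hlen hstart hend
  subst hstart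
  obtain ⟨p, q, r, rfl, hp, hq, hr⟩ := decode hok hlen
  have hnl' : nl [p,q,r] = 1 := by omega
  rcases cls_1_4_4 p hp q hq r hr hok hnl' hend with h|h|h <;> rw [h] <;> simp [wd]

lemma cls_1_3_3 : ∀ p ∈ gens, ∀ q ∈ gens, ∀ r ∈ gens, okW 3 [p,q,r] → nl [p,q,r] = 1 →
    endV 3 [p,q,r] = 3 → ([p,q,r] = [l3,cx,cX] ∨ [p,q,r] = [l3,cy,cY] ∨ [p,q,r] = [l3,cz,cZ] ∨ [p,q,r] = [cx,l1,cX] ∨ [p,q,r] = [cy,l2,cY] ∨ [p,q,r] = [cz,l4,cZ] ∨ [p,q,r] = [cx,cX,l3] ∨ [p,q,r] = [cy,cY,l3] ∨ [p,q,r] = [cz,cZ,l3]) := by decide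

lemma tgt_1_3_3 {x : P.T} (hg : x ∈ P.g (-(1:ℤ))) (hw : x ∈ P.w 3)
    (hx : P.e 3 * x * P.e 3 = x) :
    x ∈ Submodule.span K ({ιw P (wd 3 [l3,cx,cX]), ιw P (wd 3 [l3,cy,cY]), ιw P (wd 3 [l3,cz,cZ]), ιw P (wd 3 [cx,l1,cX]), ιw P (wd 3 [cy,l2,cY]), ιw P (wd 3 [cz,l4,cZ]), ιw P (wd 3 [cx,cX,l3]), ιw P (wd 3 [cy,cY,l3]), ιw P (wd 3 [cz,cZ,l3])} : Set P.T) := by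
  have h1 := mem_span_words P (-(1:ℤ)) 3 hg hw
  have h2 := sandwich_span P 3 3 (fun w hw => hw.1) h1
  rw [hx] at h2
  refine Submodule.span_mono ?_ h2
  rintro t ⟨⟨⟨v,L⟩,hv⟩, ⟨⟨hok, hnl, hlen⟩, hstart, hend⟩, rfl⟩
  dsimp at hok hnl hlen hstart hend
  subst hstart
  obtain ⟨p, q, r, rfl, hp, hq, hr⟩ := decode hok hlen
  have hnl' : nl [p,q,r] = 1 := by omega
  rcases cls_1_3_3 p hp q hq r hr hok hnl' hend with h|h|h|h|h|h|h|h|h <;> rw [h] <;> simp [wd]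

end St2
namespace St2
variable {K : Type} [Field K] (P : DnPres K 4)

def trivW (i : ℕ) (h : 1 ≤ i ∧ i ≤ 4 := by decide) : W := ⟨(i, []), h⟩

noncomputable def v0 (K : Type) [Field K] : M K :=
  Finsupp.single (trivW 1) 1 + Finsupp.single (trivW 2) 1 +
  Finsupp.single (trivW 3) 1 + Finsupp.single (trivW 4) 1

noncomputable def evL (f : P.T →ₐ[K] S K) : P.T →ₗ[K] M K where
  toFun := fun x => f x (v0 K)
  map_add' := by intro x y; simp [map_add]
  map_smul' := by intro c x; simp [map_smul]

lemma evL_apply (f : P.T →ₐ[K] S K) (x : P.T) : evL P f x = f x (v0 K) := rfl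

lemma f_genT (f : P.T →ₐ[K] S K)
    (hfc : ∀ i j, f (P.c i j) = γop K i j) (hfl : ∀ i, f (P.l i) = δop K i)
    (a : Ltr) : f (genT P a) = opA K a := by
  cases a with
  | c i j => rw [genT, hfc]; rfl
  | l i => rw [genT, hfl]; rfl

lemma ev_ι (f : P.T →ₐ[K] S K) (hfe : ∀ i, f (P.e i) = εop K i)
    (hfc : ∀ i j, f (P.c i j) = γop K i j) (hfl : ∀ i, f (P.l i) = δop K i)
    (w : W) (hw : okC w) : evL P f (ιw P w) = Finsupp.single w 1 := by
  obtain ⟨⟨v, L⟩, hv⟩ := w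
  induction L generalizing v with
  | nil =>
      rw [evL_apply]
      show f (P.e v * prodL P []) (v0 K) = _
      rw [prodL, mul_one, hfe]
      have h1 : 1 ≤ v := hv.1
      have h2 : v ≤ 4 := hv.2
      rw [v0, map_add, map_add, map_add, εop]
      rw [opE_single, opE_single, opE_single, opE_single]
      interval_cases v <;> simp [trivW]
  | cons a L ih =>
      obtain ⟨ha, hs, hrest⟩ := hw
      rw [evL_apply, ι_cons P a L v hv hs (okL_tgt ha), map_mul]
      rw [Module.End.mul_apply]
      rw [show (f (ιw P ⟨(tgt a, L), okL_tgt ha⟩)) (v0 K)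
          = evL P f (ιw P ⟨(tgt a, L), okL_tgt ha⟩) from rfl]
      rw [ih (tgt a) (okL_tgt ha) hrest, f_genT P f hfc hfl]
      rw [opA_single, dif_pos ⟨ha, rfl⟩]
      congr 1
      exact Subtype.ext (by simp [hs])

def ΩF : Finset W :=
  {wd 3 [cy,cY,cx,cX], wd 3 [cx,cX,cy,cY], wd 3 [cz,cZ,cx,cX], wd 3 [cz,cZ,cy,cY],
   wd 3 [cx,cX,cz,cZ], wd 3 [cy,cY,cz,cZ], wd 1 [cX,cy,cY,cx], wd 1 [cX,cz,cZ,cx],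
   wd 2 [cY,cx,cX,cy], wd 2 [cY,cz,cZ,cy], wd 4 [cZ,cx,cX,cz], wd 4 [cZ,cy,cY,cz]}

noncomputable def lam (f : P.T →ₐ[K] S K) : P.T →ₗ[K] K :=
  (∑ w ∈ ΩF, (Finsupp.lapply w : M K →ₗ[K] K)).comp (evL P f)

lemma lam_ι (f : P.T →ₐ[K] S K) (hfe : ∀ i, f (P.e i) = εop K i)
    (hfc : ∀ i j, f (P.c i j) = γop K i j) (hfl : ∀ i, f (P.l i) = δop K i)
    (w : W) (hw : okC w) :
    lam P f (ιw P w) = if w ∈ ΩF then 1 else 0 := by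
  rw [lam, LinearMap.comp_apply, ev_ι P f hfe hfc hfl w hw, LinearMap.sum_apply]
  have : ∀ u ∈ ΩF, (Finsupp.lapply u : M K →ₗ[K] K) (Finsupp.single w 1)
      = if w = u then 1 else 0 := by
    intro u _
    rw [show (Finsupp.lapply u : M K →ₗ[K] K) (Finsupp.single w 1)
        = (Finsupp.single w (1:K)) u from rfl, Finsupp.single_apply]
  rw [Finset.sum_congr rfl this, Finset.sum_ite_eq ΩF w (fun _ => (1:K))]

end St2
namespace St2
variable {K : Type} [Field K]

structure Ctx (K : Type) [Field K] where
  P : DnPres K 4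
  d : P.T →ₗ[K] P.T
  f : P.T →ₐ[K] S K
  hfe : ∀ i, f (P.e i) = εop K i
  hfc : ∀ i j, f (P.c i j) = γop K i j
  hfl : ∀ i, f (P.l i) = δop K i
  h2K : (2 : K) = 0
  leib : ∀ (m : ℤ) (x : P.T), x ∈ P.g m → ∀ y : P.T,
    d (x * y) = d x * y + negOneZ m • (x * d y)
  de : ∀ i, d (P.e i) = 0
  dc : ∀ i j, d (P.c i j) = 0
  dl1 : d (P.l 1) = P.c 1 3 * P.c 3 1
  dl2 : d (P.l 2) = P.c 2 3 * P.c 3 2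
  dl3 : d (P.l 3) = -(P.c 3 1 * P.c 1 3) - P.c 3 2 * P.c 2 3 + P.c 3 4 * P.c 4 3
  dl4 : d (P.l 4) = -(P.c 4 3 * P.c 3 4)

variable (C : Ctx K)

lemma negOneZ_zero : negOneZ 0 = 1 := rfl
lemma negOneZ_neg_one : negOneZ (-1) = -1 := rfl

lemma c_eq (i j : ℕ) (hb : 1 ≤ i ∧ i ≤ 4) :
    C.P.c i j = ιw C.P ⟨(i, [Ltr.c i j]), hb⟩ := by
  show _ = C.P.e i * prodL C.P [Ltr.c i j]
  rw [prodL, prodL, genT, mul_one, (C.P.c_comp i j).1]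

lemma l_eq (i : ℕ) (hb : 1 ≤ i ∧ i ≤ 4) :
    C.P.l i = ιw C.P ⟨(i, [Ltr.l i]), hb⟩ := by
  show _ = C.P.e i * prodL C.P [Ltr.l i]
  rw [prodL, prodL, genT, mul_one, (C.P.l_comp i).1]

lemma ιmul {v v' : ℕ} (L L' : List Ltr) {hv hv'} (h1 : okW v L) (h2 : okW v' L')
    (h3 : endV v L = v') :
    ιw C.P ⟨(v,L),hv⟩ * ιw C.P ⟨(v',L'),hv'⟩ = ιw C.P ⟨(v,L++L'),hv⟩ := by
  rw [ι_mul C.P _ _ (show okC ⟨(v,L),hv⟩ from h1) (show okC ⟨(v',L'),hv'⟩ from h2)]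
  exact dif_pos h3.symm

lemma d_c_mul (i j : ℕ) (t : C.P.T) : C.d (C.P.c i j * t) = C.P.c i j * C.d t := by
  rw [C.leib 0 _ (C.P.c_g i j) t, C.dc, zero_mul, zero_add, negOneZ_zero, one_smul]

lemma d_l_mul (i : ℕ) (t : C.P.T) :
    C.d (C.P.l i * t) = C.d (C.P.l i) * t - C.P.l i * C.d t := by
  rw [C.leib (-1) _ (C.P.l_g i) t, negOneZ_neg_one, neg_smul, one_smul, sub_eq_add_neg]

lemma d_pure (v : ℕ) (L : List Ltr) (hv) (hok : okW v L) (hnl : nl L = 0) :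
    C.d (ιw C.P ⟨(v, L), hv⟩) = 0 := by
  induction L generalizing v with
  | nil =>
      show C.d (C.P.e v * prodL C.P []) = 0
      rw [prodL, mul_one, C.de]
  | cons a L ih =>
      obtain ⟨ha, hs, hrest⟩ := hok
      rw [ι_cons C.P a L v hv hs (okL_tgt ha)]
      cases a with
      | c i j =>
          rw [show genT C.P (Ltr.c i j) = C.P.c i j from rfl, d_c_mul,
            ih (tgt (Ltr.c i j)) (okL_tgt ha) hrest (by simpa [nl] using hnl), mul_zero]
      | l i => simp [nl] at hnl

/-- dl values in word form -/
lemma dl1ι : C.d (C.P.l 1) = ιw C.P (wd 1 [cX,cx]) := by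
  rw [C.dl1, c_eq C 1 3 (by decide), c_eq C 3 1 (by decide)]
  exact ιmul C [cX] [cx] (by decide) (by decide) (by decide)

lemma dl2ι : C.d (C.P.l 2) = ιw C.P (wd 2 [cY,cy]) := by
  rw [C.dl2, c_eq C 2 3 (by decide), c_eq C 3 2 (by decide)]
  exact ιmul C [cY] [cy] (by decide) (by decide) (by decide)

lemma dl3ι : C.d (C.P.l 3) =
    -ιw C.P (wd 3 [cx,cX]) - ιw C.P (wd 3 [cy,cY]) + ιw C.P (wd 3 [cz,cZ]) := by
  rw [C.dl3, c_eq C 3 1 (by decide), c_eq C 1 3 (by decide), c_eq C 3 2 (by decide),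
    c_eq C 2 3 (by decide), c_eq C 3 4 (by decide), c_eq C 4 3 (by decide)]
  rw [ιmul C [cx] [cX] (by decide) (by decide) (by decide),
    ιmul C [cy] [cY] (by decide) (by decide) (by decide),
    ιmul C [cz] [cZ] (by decide) (by decide) (by decide)]
  rfl

lemma dl4ι : C.d (C.P.l 4) = -ιw C.P (wd 4 [cZ,cz]) := by
  rw [C.dl4, c_eq C 4 3 (by decide), c_eq C 3 4 (by decide)]
  rw [ιmul C [cZ] [cz] (by decide) (by decide) (by decide)]
  rfl

noncomputable def Λ : C.P.T →ₗ[K] K := lam C.P C.f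

lemma lamv (v : ℕ) (L : List Ltr) (hv) (hok : okW v L) :
    Λ C (ιw C.P ⟨(v,L),hv⟩) = if (⟨(v,L),hv⟩ : W) ∈ ΩF then 1 else 0 :=
  lam_ι C.P C.f C.hfe C.hfc C.hfl _ hok

end St2
namespace St2
variable {K : Type} [Field K] (C : Ctx K)

lemma c_mul_ι (i j : ℕ) (L : List Ltr) (hb : 1 ≤ i ∧ i ≤ 4) (h2 : 1 ≤ j ∧ j ≤ 4) :
    C.P.c i j * ιw C.P ⟨(j, L), h2⟩ = ιw C.P ⟨(i, Ltr.c i j :: L), hb⟩ :=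
  (ι_cons C.P (Ltr.c i j) L i hb rfl h2).symm

lemma l_mul_ι (i : ℕ) (L : List Ltr) (hb : 1 ≤ i ∧ i ≤ 4) :
    C.P.l i * ιw C.P ⟨(i, L), hb⟩ = ιw C.P ⟨(i, Ltr.l i :: L), hb⟩ :=
  (ι_cons C.P (Ltr.l i) L i hb rfl hb).symm

lemma ι_mul_c (v i j : ℕ) (L : List Ltr) (hv) (hbi : 1 ≤ i ∧ i ≤ 4)
    (h1 : okW v L) (h2 : okW i [Ltr.c i j]) (hend : endV v L = i) :
    ιw C.P ⟨(v, L), hv⟩ * C.P.c i j = ιw C.P ⟨(v, L ++ [Ltr.c i j]), hv⟩ := by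
  rw [c_eq C i j hbi]
  exact ιmul C L [Ltr.c i j] h1 h2 hend

lemma thA_t1 : Λ C (C.d (ιw C.P (wd 3 [l3,cx,cX]))) = 0 := by
  rw [show ιw C.P (wd 3 [l3,cx,cX]) = C.P.l 3 * ιw C.P (wd 3 [cx,cX]) from
    (l_mul_ι C 3 [cx,cX] (by decide)).symm]
  rw [d_l_mul, dl3ι, d_pure C 3 [cx,cX] (by decide) (by decide) (by decide), mul_zero, sub_zero]
  simp only [add_mul, sub_mul, neg_mul]
  rw [ιmul C [cx,cX] [cx,cX] (by decide) (by decide) (by decide),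
      ιmul C [cy,cY] [cx,cX] (by decide) (by decide) (by decide),
      ιmul C [cz,cZ] [cx,cX] (by decide) (by decide) (by decide)]
  rw [map_add, map_sub, map_neg]
  rw [lamv C 3 _ _ (by decide), lamv C 3 _ _ (by decide), lamv C 3 _ _ (by decide)]
  rw [if_neg (by decide), if_pos (by decide), if_pos (by decide)]
  ring

end St2
namespace St2
variable {K : Type} [Field K] (C : Ctx K)

lemma thA_0 : Λ C (C.d (ιw C.P (wd 3 [l3,cx,cX]))) = 0 := by
  rw [show ιw C.P (wd 3 [l3,cx,cX]) = C.P.l 3 * ιw C.P (wd 3 [cx,cX]) from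
    (l_mul_ι C 3 [cx,cX] (by decide)).symm]
  rw [d_l_mul, dl3ι, d_pure C 3 [cx,cX] (by decide) (by decide) (by decide), mul_zero, sub_zero]
  try simp only [add_mul, sub_mul, neg_mul]
  rw [ιmul C [cx,cX] [cx,cX] (by decide) (by decide) (by decide)]
  rw [ιmul C [cy,cY] [cx,cX] (by decide) (by decide) (by decide)]
  rw [ιmul C [cz,cZ] [cx,cX] (by decide) (by decide) (by decide)]
  try simp only [map_add, map_sub, map_neg]
  rw [lamv C 3 _ _ (by decide)]
  rw [lamv C 3 _ _ (by decide)]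
  rw [lamv C 3 _ _ (by decide)]
  rw [if_neg (by decide), if_pos (by decide), if_pos (by decide)]
  try ring

lemma thA_1 : Λ C (C.d (ιw C.P (wd 3 [cx,l1,cX]))) = 0 := by
  rw [show ιw C.P (wd 3 [cx,l1,cX]) = C.P.c 3 1 * ιw C.P (wd 1 [l1,cX]) from
    (c_mul_ι C 3 1 [l1,cX] (by decide) (by decide)).symm]
  rw [d_c_mul]
  rw [show ιw C.P (wd 1 [l1,cX]) = C.P.l 1 * ιw C.P (wd 1 [cX]) from
    (l_mul_ι C 1 [cX] (by decide)).symm]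
  rw [d_l_mul, dl1ι, d_pure C 1 [cX] (by decide) (by decide) (by decide), mul_zero, sub_zero]
  try simp only [add_mul, sub_mul, neg_mul, mul_add, mul_sub, mul_neg]
  rw [ιmul C [cX,cx] [cX] (by decide) (by decide) (by decide)]
  rw [c_mul_ι C 3 1 ([cX,cx] ++ [cX]) (by decide) (by decide)]
  try simp only [map_add, map_sub, map_neg]
  rw [lamv C 3 _ _ (by decide)]
  rw [if_neg (by decide)]
  try ring

lemma thA_2 : Λ C (C.d (ιw C.P (wd 3 [cx,cX,l3]))) = 0 := by
  rw [show ιw C.P (wd 3 [cx,cX,l3]) = C.P.c 3 1 * ιw C.P (wd 1 [cX,l3]) from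
    (c_mul_ι C 3 1 [cX,l3] (by decide) (by decide)).symm]
  rw [d_c_mul]
  rw [show ιw C.P (wd 1 [cX,l3]) = C.P.c 1 3 * ιw C.P (wd 3 [l3]) from
    (c_mul_ι C 1 3 [l3] (by decide) (by decide)).symm]
  rw [d_c_mul]
  rw [show ιw C.P (wd 3 [l3]) = C.P.l 3 from (l_eq C 3 (by decide)).symm]
  rw [dl3ι]
  try simp only [mul_add, mul_sub, mul_neg]
  rw [c_mul_ι C 1 3 [cx,cX] (by decide) (by decide)]
  rw [c_mul_ι C 1 3 [cy,cY] (by decide) (by decide)]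
  rw [c_mul_ι C 1 3 [cz,cZ] (by decide) (by decide)]
  rw [c_mul_ι C 3 1 (cX :: [cx,cX]) (by decide) (by decide)]
  rw [c_mul_ι C 3 1 (cX :: [cy,cY]) (by decide) (by decide)]
  rw [c_mul_ι C 3 1 (cX :: [cz,cZ]) (by decide) (by decide)]
  try simp only [map_add, map_sub, map_neg]
  rw [lamv C 3 _ _ (by decide)]
  rw [lamv C 3 _ _ (by decide)]
  rw [lamv C 3 _ _ (by decide)]
  rw [if_neg (by decide), if_pos (by decide), if_pos (by decide)]
  try ring

lemma thA_3 : Λ C (C.d (ιw C.P (wd 3 [l3,cy,cY]))) = 0 := by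
  rw [show ιw C.P (wd 3 [l3,cy,cY]) = C.P.l 3 * ιw C.P (wd 3 [cy,cY]) from
    (l_mul_ι C 3 [cy,cY] (by decide)).symm]
  rw [d_l_mul, dl3ι, d_pure C 3 [cy,cY] (by decide) (by decide) (by decide), mul_zero, sub_zero]
  try simp only [add_mul, sub_mul, neg_mul]
  rw [ιmul C [cx,cX] [cy,cY] (by decide) (by decide) (by decide)]
  rw [ιmul C [cy,cY] [cy,cY] (by decide) (by decide) (by decide)]
  rw [ιmul C [cz,cZ] [cy,cY] (by decide) (by decide) (by decide)]
  try simp only [map_add, map_sub, map_neg]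
  rw [lamv C 3 _ _ (by decide)]
  rw [lamv C 3 _ _ (by decide)]
  rw [lamv C 3 _ _ (by decide)]
  rw [if_pos (by decide), if_neg (by decide), if_pos (by decide)]
  try ring

lemma thA_4 : Λ C (C.d (ιw C.P (wd 3 [cy,l2,cY]))) = 0 := by
  rw [show ιw C.P (wd 3 [cy,l2,cY]) = C.P.c 3 2 * ιw C.P (wd 2 [l2,cY]) from
    (c_mul_ι C 3 2 [l2,cY] (by decide) (by decide)).symm]
  rw [d_c_mul]
  rw [show ιw C.P (wd 2 [l2,cY]) = C.P.l 2 * ιw C.P (wd 2 [cY]) from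
    (l_mul_ι C 2 [cY] (by decide)).symm]
  rw [d_l_mul, dl2ι, d_pure C 2 [cY] (by decide) (by decide) (by decide), mul_zero, sub_zero]
  try simp only [add_mul, sub_mul, neg_mul, mul_add, mul_sub, mul_neg]
  rw [ιmul C [cY,cy] [cY] (by decide) (by decide) (by decide)]
  rw [c_mul_ι C 3 2 ([cY,cy] ++ [cY]) (by decide) (by decide)]
  try simp only [map_add, map_sub, map_neg]
  rw [lamv C 3 _ _ (by decide)]
  rw [if_neg (by decide)]
  try ring

lemma thA_5 : Λ C (C.d (ιw C.P (wd 3 [cy,cY,l3]))) = 0 := by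
  rw [show ιw C.P (wd 3 [cy,cY,l3]) = C.P.c 3 2 * ιw C.P (wd 2 [cY,l3]) from
    (c_mul_ι C 3 2 [cY,l3] (by decide) (by decide)).symm]
  rw [d_c_mul]
  rw [show ιw C.P (wd 2 [cY,l3]) = C.P.c 2 3 * ιw C.P (wd 3 [l3]) from
    (c_mul_ι C 2 3 [l3] (by decide) (by decide)).symm]
  rw [d_c_mul]
  rw [show ιw C.P (wd 3 [l3]) = C.P.l 3 from (l_eq C 3 (by decide)).symm]
  rw [dl3ι]
  try simp only [mul_add, mul_sub, mul_neg]
  rw [c_mul_ι C 2 3 [cx,cX] (by decide) (by decide)]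
  rw [c_mul_ι C 2 3 [cy,cY] (by decide) (by decide)]
  rw [c_mul_ι C 2 3 [cz,cZ] (by decide) (by decide)]
  rw [c_mul_ι C 3 2 (cY :: [cx,cX]) (by decide) (by decide)]
  rw [c_mul_ι C 3 2 (cY :: [cy,cY]) (by decide) (by decide)]
  rw [c_mul_ι C 3 2 (cY :: [cz,cZ]) (by decide) (by decide)]
  try simp only [map_add, map_sub, map_neg]
  rw [lamv C 3 _ _ (by decide)]
  rw [lamv C 3 _ _ (by decide)]
  rw [lamv C 3 _ _ (by decide)]
  rw [if_pos (by decide), if_neg (by decide), if_pos (by decide)]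
  try ring

lemma thA_6 : Λ C (C.d (ιw C.P (wd 3 [l3,cz,cZ]))) = 0 := by
  rw [show ιw C.P (wd 3 [l3,cz,cZ]) = C.P.l 3 * ιw C.P (wd 3 [cz,cZ]) from
    (l_mul_ι C 3 [cz,cZ] (by decide)).symm]
  rw [d_l_mul, dl3ι, d_pure C 3 [cz,cZ] (by decide) (by decide) (by decide), mul_zero, sub_zero]
  try simp only [add_mul, sub_mul, neg_mul]
  rw [ιmul C [cx,cX] [cz,cZ] (by decide) (by decide) (by decide)]
  rw [ιmul C [cy,cY] [cz,cZ] (by decide) (by decide) (by decide)]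
  rw [ιmul C [cz,cZ] [cz,cZ] (by decide) (by decide) (by decide)]
  try simp only [map_add, map_sub, map_neg]
  rw [lamv C 3 _ _ (by decide)]
  rw [lamv C 3 _ _ (by decide)]
  rw [lamv C 3 _ _ (by decide)]
  rw [if_pos (by decide), if_pos (by decide), if_neg (by decide)]
  linear_combination (-1 : K) * C.h2K

lemma thA_7 : Λ C (C.d (ιw C.P (wd 3 [cz,l4,cZ]))) = 0 := by
  rw [show ιw C.P (wd 3 [cz,l4,cZ]) = C.P.c 3 4 * ιw C.P (wd 4 [l4,cZ]) from
    (c_mul_ι C 3 4 [l4,cZ] (by decide) (by decide)).symm]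
  rw [d_c_mul]
  rw [show ιw C.P (wd 4 [l4,cZ]) = C.P.l 4 * ιw C.P (wd 4 [cZ]) from
    (l_mul_ι C 4 [cZ] (by decide)).symm]
  rw [d_l_mul, dl4ι, d_pure C 4 [cZ] (by decide) (by decide) (by decide), mul_zero, sub_zero]
  try simp only [add_mul, sub_mul, neg_mul, mul_add, mul_sub, mul_neg]
  rw [ιmul C [cZ,cz] [cZ] (by decide) (by decide) (by decide)]
  rw [c_mul_ι C 3 4 ([cZ,cz] ++ [cZ]) (by decide) (by decide)]
  try simp only [map_add, map_sub, map_neg]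
  rw [lamv C 3 _ _ (by decide)]
  rw [if_neg (by decide)]
  try ring

lemma thA_8 : Λ C (C.d (ιw C.P (wd 3 [cz,cZ,l3]))) = 0 := by
  rw [show ιw C.P (wd 3 [cz,cZ,l3]) = C.P.c 3 4 * ιw C.P (wd 4 [cZ,l3]) from
    (c_mul_ι C 3 4 [cZ,l3] (by decide) (by decide)).symm]
  rw [d_c_mul]
  rw [show ιw C.P (wd 4 [cZ,l3]) = C.P.c 4 3 * ιw C.P (wd 3 [l3]) from
    (c_mul_ι C 4 3 [l3] (by decide) (by decide)).symm]
  rw [d_c_mul]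
  rw [show ιw C.P (wd 3 [l3]) = C.P.l 3 from (l_eq C 3 (by decide)).symm]
  rw [dl3ι]
  try simp only [mul_add, mul_sub, mul_neg]
  rw [c_mul_ι C 4 3 [cx,cX] (by decide) (by decide)]
  rw [c_mul_ι C 4 3 [cy,cY] (by decide) (by decide)]
  rw [c_mul_ι C 4 3 [cz,cZ] (by decide) (by decide)]
  rw [c_mul_ι C 3 4 (cZ :: [cx,cX]) (by decide) (by decide)]
  rw [c_mul_ι C 3 4 (cZ :: [cy,cY]) (by decide) (by decide)]
  rw [c_mul_ι C 3 4 (cZ :: [cz,cZ]) (by decide) (by decide)]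
  try simp only [map_add, map_sub, map_neg]
  rw [lamv C 3 _ _ (by decide)]
  rw [lamv C 3 _ _ (by decide)]
  rw [lamv C 3 _ _ (by decide)]
  rw [if_pos (by decide), if_pos (by decide), if_neg (by decide)]
  linear_combination (-1 : K) * C.h2K

lemma thA_9 : Λ C (C.d (ιw C.P (wd 1 [l1,cX,cx]))) = 0 := by
  rw [show ιw C.P (wd 1 [l1,cX,cx]) = C.P.l 1 * ιw C.P (wd 1 [cX,cx]) from
    (l_mul_ι C 1 [cX,cx] (by decide)).symm]
  rw [d_l_mul, dl1ι, d_pure C 1 [cX,cx] (by decide) (by decide) (by decide), mul_zero, sub_zero]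
  try simp only [add_mul, sub_mul, neg_mul]
  rw [ιmul C [cX,cx] [cX,cx] (by decide) (by decide) (by decide)]
  try simp only [map_add, map_sub, map_neg]
  rw [lamv C 1 _ _ (by decide)]
  rw [if_neg (by decide)]
  try ring

lemma thA_10 : Λ C (C.d (ιw C.P (wd 1 [cX,l3,cx]))) = 0 := by
  rw [show ιw C.P (wd 1 [cX,l3,cx]) = C.P.c 1 3 * ιw C.P (wd 3 [l3,cx]) from
    (c_mul_ι C 1 3 [l3,cx] (by decide) (by decide)).symm]
  rw [d_c_mul]
  rw [show ιw C.P (wd 3 [l3,cx]) = C.P.l 3 * ιw C.P (wd 3 [cx]) from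
    (l_mul_ι C 3 [cx] (by decide)).symm]
  rw [d_l_mul, dl3ι, d_pure C 3 [cx] (by decide) (by decide) (by decide), mul_zero, sub_zero]
  try simp only [add_mul, sub_mul, neg_mul, mul_add, mul_sub, mul_neg]
  rw [ιmul C [cx,cX] [cx] (by decide) (by decide) (by decide)]
  rw [ιmul C [cy,cY] [cx] (by decide) (by decide) (by decide)]
  rw [ιmul C [cz,cZ] [cx] (by decide) (by decide) (by decide)]
  rw [c_mul_ι C 1 3 ([cx,cX] ++ [cx]) (by decide) (by decide)]
  rw [c_mul_ι C 1 3 ([cy,cY] ++ [cx]) (by decide) (by decide)]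
  rw [c_mul_ι C 1 3 ([cz,cZ] ++ [cx]) (by decide) (by decide)]
  try simp only [map_add, map_sub, map_neg]
  rw [lamv C 1 _ _ (by decide)]
  rw [lamv C 1 _ _ (by decide)]
  rw [lamv C 1 _ _ (by decide)]
  rw [if_neg (by decide), if_pos (by decide), if_pos (by decide)]
  try ring

lemma thA_11 : Λ C (C.d (ιw C.P (wd 1 [cX,cx,l1]))) = 0 := by
  rw [show ιw C.P (wd 1 [cX,cx,l1]) = C.P.c 1 3 * ιw C.P (wd 3 [cx,l1]) from
    (c_mul_ι C 1 3 [cx,l1] (by decide) (by decide)).symm]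
  rw [d_c_mul]
  rw [show ιw C.P (wd 3 [cx,l1]) = C.P.c 3 1 * ιw C.P (wd 1 [l1]) from
    (c_mul_ι C 3 1 [l1] (by decide) (by decide)).symm]
  rw [d_c_mul]
  rw [show ιw C.P (wd 1 [l1]) = C.P.l 1 from (l_eq C 1 (by decide)).symm]
  rw [dl1ι]
  try simp only [mul_add, mul_sub, mul_neg]
  rw [c_mul_ι C 3 1 [cX,cx] (by decide) (by decide)]
  rw [c_mul_ι C 1 3 (cx :: [cX,cx]) (by decide) (by decide)]
  try simp only [map_add, map_sub, map_neg]
  rw [lamv C 1 _ _ (by decide)]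
  rw [if_neg (by decide)]
  try ring

lemma thA_12 : Λ C (C.d (ιw C.P (wd 2 [l2,cY,cy]))) = 0 := by
  rw [show ιw C.P (wd 2 [l2,cY,cy]) = C.P.l 2 * ιw C.P (wd 2 [cY,cy]) from
    (l_mul_ι C 2 [cY,cy] (by decide)).symm]
  rw [d_l_mul, dl2ι, d_pure C 2 [cY,cy] (by decide) (by decide) (by decide), mul_zero, sub_zero]
  try simp only [add_mul, sub_mul, neg_mul]
  rw [ιmul C [cY,cy] [cY,cy] (by decide) (by decide) (by decide)]
  try simp only [map_add, map_sub, map_neg]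
  rw [lamv C 2 _ _ (by decide)]
  rw [if_neg (by decide)]
  try ring

lemma thA_13 : Λ C (C.d (ιw C.P (wd 2 [cY,l3,cy]))) = 0 := by
  rw [show ιw C.P (wd 2 [cY,l3,cy]) = C.P.c 2 3 * ιw C.P (wd 3 [l3,cy]) from
    (c_mul_ι C 2 3 [l3,cy] (by decide) (by decide)).symm]
  rw [d_c_mul]
  rw [show ιw C.P (wd 3 [l3,cy]) = C.P.l 3 * ιw C.P (wd 3 [cy]) from
    (l_mul_ι C 3 [cy] (by decide)).symm]
  rw [d_l_mul, dl3ι, d_pure C 3 [cy] (by decide) (by decide) (by decide), mul_zero, sub_zero]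
  try simp only [add_mul, sub_mul, neg_mul, mul_add, mul_sub, mul_neg]
  rw [ιmul C [cx,cX] [cy] (by decide) (by decide) (by decide)]
  rw [ιmul C [cy,cY] [cy] (by decide) (by decide) (by decide)]
  rw [ιmul C [cz,cZ] [cy] (by decide) (by decide) (by decide)]
  rw [c_mul_ι C 2 3 ([cx,cX] ++ [cy]) (by decide) (by decide)]
  rw [c_mul_ι C 2 3 ([cy,cY] ++ [cy]) (by decide) (by decide)]
  rw [c_mul_ι C 2 3 ([cz,cZ] ++ [cy]) (by decide) (by decide)]
  try simp only [map_add, map_sub, map_neg]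
  rw [lamv C 2 _ _ (by decide)]
  rw [lamv C 2 _ _ (by decide)]
  rw [lamv C 2 _ _ (by decide)]
  rw [if_pos (by decide), if_neg (by decide), if_pos (by decide)]
  try ring

lemma thA_14 : Λ C (C.d (ιw C.P (wd 2 [cY,cy,l2]))) = 0 := by
  rw [show ιw C.P (wd 2 [cY,cy,l2]) = C.P.c 2 3 * ιw C.P (wd 3 [cy,l2]) from
    (c_mul_ι C 2 3 [cy,l2] (by decide) (by decide)).symm]
  rw [d_c_mul]
  rw [show ιw C.P (wd 3 [cy,l2]) = C.P.c 3 2 * ιw C.P (wd 2 [l2]) from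
    (c_mul_ι C 3 2 [l2] (by decide) (by decide)).symm]
  rw [d_c_mul]
  rw [show ιw C.P (wd 2 [l2]) = C.P.l 2 from (l_eq C 2 (by decide)).symm]
  rw [dl2ι]
  try simp only [mul_add, mul_sub, mul_neg]
  rw [c_mul_ι C 3 2 [cY,cy] (by decide) (by decide)]
  rw [c_mul_ι C 2 3 (cy :: [cY,cy]) (by decide) (by decide)]
  try simp only [map_add, map_sub, map_neg]
  rw [lamv C 2 _ _ (by decide)]
  rw [if_neg (by decide)]
  try ring

lemma thA_15 : Λ C (C.d (ιw C.P (wd 4 [l4,cZ,cz]))) = 0 := by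
  rw [show ιw C.P (wd 4 [l4,cZ,cz]) = C.P.l 4 * ιw C.P (wd 4 [cZ,cz]) from
    (l_mul_ι C 4 [cZ,cz] (by decide)).symm]
  rw [d_l_mul, dl4ι, d_pure C 4 [cZ,cz] (by decide) (by decide) (by decide), mul_zero, sub_zero]
  try simp only [add_mul, sub_mul, neg_mul]
  rw [ιmul C [cZ,cz] [cZ,cz] (by decide) (by decide) (by decide)]
  try simp only [map_add, map_sub, map_neg]
  rw [lamv C 4 _ _ (by decide)]
  rw [if_neg (by decide)]
  try ring

lemma thA_16 : Λ C (C.d (ιw C.P (wd 4 [cZ,l3,cz]))) = 0 := by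
  rw [show ιw C.P (wd 4 [cZ,l3,cz]) = C.P.c 4 3 * ιw C.P (wd 3 [l3,cz]) from
    (c_mul_ι C 4 3 [l3,cz] (by decide) (by decide)).symm]
  rw [d_c_mul]
  rw [show ιw C.P (wd 3 [l3,cz]) = C.P.l 3 * ιw C.P (wd 3 [cz]) from
    (l_mul_ι C 3 [cz] (by decide)).symm]
  rw [d_l_mul, dl3ι, d_pure C 3 [cz] (by decide) (by decide) (by decide), mul_zero, sub_zero]
  try simp only [add_mul, sub_mul, neg_mul, mul_add, mul_sub, mul_neg]
  rw [ιmul C [cx,cX] [cz] (by decide) (by decide) (by decide)]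
  rw [ιmul C [cy,cY] [cz] (by decide) (by decide) (by decide)]
  rw [ιmul C [cz,cZ] [cz] (by decide) (by decide) (by decide)]
  rw [c_mul_ι C 4 3 ([cx,cX] ++ [cz]) (by decide) (by decide)]
  rw [c_mul_ι C 4 3 ([cy,cY] ++ [cz]) (by decide) (by decide)]
  rw [c_mul_ι C 4 3 ([cz,cZ] ++ [cz]) (by decide) (by decide)]
  try simp only [map_add, map_sub, map_neg]
  rw [lamv C 4 _ _ (by decide)]
  rw [lamv C 4 _ _ (by decide)]
  rw [lamv C 4 _ _ (by decide)]
  rw [if_pos (by decide), if_pos (by decide), if_neg (by decide)]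
  linear_combination (-1 : K) * C.h2K

lemma thA_17 : Λ C (C.d (ιw C.P (wd 4 [cZ,cz,l4]))) = 0 := by
  rw [show ιw C.P (wd 4 [cZ,cz,l4]) = C.P.c 4 3 * ιw C.P (wd 3 [cz,l4]) from
    (c_mul_ι C 4 3 [cz,l4] (by decide) (by decide)).symm]
  rw [d_c_mul]
  rw [show ιw C.P (wd 3 [cz,l4]) = C.P.c 3 4 * ιw C.P (wd 4 [l4]) from
    (c_mul_ι C 3 4 [l4] (by decide) (by decide)).symm]
  rw [d_c_mul]
  rw [show ιw C.P (wd 4 [l4]) = C.P.l 4 from (l_eq C 4 (by decide)).symm]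
  rw [dl4ι]
  try simp only [mul_add, mul_sub, mul_neg]
  rw [c_mul_ι C 3 4 [cZ,cz] (by decide) (by decide)]
  rw [c_mul_ι C 4 3 (cz :: [cZ,cz]) (by decide) (by decide)]
  try simp only [map_add, map_sub, map_neg]
  rw [lamv C 4 _ _ (by decide)]
  rw [if_neg (by decide)]
  try ring

def genSetA_3 : Set C.P.T := {ιw C.P (wd 3 [l3,cx,cX]), ιw C.P (wd 3 [cx,l1,cX]), ιw C.P (wd 3 [cx,cX,l3]), ιw C.P (wd 3 [l3,cy,cY]), ιw C.P (wd 3 [cy,l2,cY]), ιw C.P (wd 3 [cy,cY,l3]), ιw C.P (wd 3 [l3,cz,cZ]), ιw C.P (wd 3 [cz,l4,cZ]), ιw C.P (wd 3 [cz,cZ,l3])}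

lemma claimA_3 (t : C.P.T)
    (ht : t ∈ Submodule.span K (genSetA_3 C)) :
    Λ C (C.d t) = 0 := by
  induction ht using Submodule.span_induction with
  | mem x hx =>
      simp only [genSetA_3, Set.mem_insert_iff, Set.mem_singleton_iff] at hx
      rcases hx with rfl|rfl|rfl|rfl|rfl|rfl|rfl|rfl|rfl
      · exact thA_0 C
      · exact thA_1 C
      · exact thA_2 C
      · exact thA_3 C
      · exact thA_4 C
      · exact thA_5 C
      · exact thA_6 C
      · exact thA_7 C
      · exact thA_8 C
  | zero => rw [map_zero, map_zero]
  | add x y _ _ h1 h2 => rw [map_add, map_add, h1, h2, add_zero]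
  | smul a x _ h1 => rw [map_smul, map_smul, h1, smul_zero]

def genSetA_1 : Set C.P.T := {ιw C.P (wd 1 [l1,cX,cx]), ιw C.P (wd 1 [cX,l3,cx]), ιw C.P (wd 1 [cX,cx,l1])}

lemma claimA_1 (t : C.P.T)
    (ht : t ∈ Submodule.span K (genSetA_1 C)) :
    Λ C (C.d t) = 0 := by
  induction ht using Submodule.span_induction with
  | mem x hx =>
      simp only [genSetA_1, Set.mem_insert_iff, Set.mem_singleton_iff] at hx
      rcases hx with rfl|rfl|rfl
      · exact thA_9 C
      · exact thA_10 C
      · exact thA_11 C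
  | zero => rw [map_zero, map_zero]
  | add x y _ _ h1 h2 => rw [map_add, map_add, h1, h2, add_zero]
  | smul a x _ h1 => rw [map_smul, map_smul, h1, smul_zero]

def genSetA_2 : Set C.P.T := {ιw C.P (wd 2 [l2,cY,cy]), ιw C.P (wd 2 [cY,l3,cy]), ιw C.P (wd 2 [cY,cy,l2])}

lemma claimA_2 (t : C.P.T)
    (ht : t ∈ Submodule.span K (genSetA_2 C)) :
    Λ C (C.d t) = 0 := by
  induction ht using Submodule.span_induction with
  | mem x hx =>
      simp only [genSetA_2, Set.mem_insert_iff, Set.mem_singleton_iff] at hx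
      rcases hx with rfl|rfl|rfl
      · exact thA_12 C
      · exact thA_13 C
      · exact thA_14 C
  | zero => rw [map_zero, map_zero]
  | add x y _ _ h1 h2 => rw [map_add, map_add, h1, h2, add_zero]
  | smul a x _ h1 => rw [map_smul, map_smul, h1, smul_zero]

def genSetA_4 : Set C.P.T := {ιw C.P (wd 4 [l4,cZ,cz]), ιw C.P (wd 4 [cZ,l3,cz]), ιw C.P (wd 4 [cZ,cz,l4])}

lemma claimA_4 (t : C.P.T)
    (ht : t ∈ Submodule.span K (genSetA_4 C)) :
    Λ C (C.d t) = 0 := by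
  induction ht using Submodule.span_induction with
  | mem x hx =>
      simp only [genSetA_4, Set.mem_insert_iff, Set.mem_singleton_iff] at hx
      rcases hx with rfl|rfl|rfl
      · exact thA_15 C
      · exact thA_16 C
      · exact thA_17 C
  | zero => rw [map_zero, map_zero]
  | add x y _ _ h1 h2 => rw [map_add, map_add, h1, h2, add_zero]
  | smul a x _ h1 => rw [map_smul, map_smul, h1, smul_zero]

end St2
namespace St2
variable {K : Type} [Field K] (C : Ctx K)

lemma thB_x_0 : Λ C (ιw C.P (wd 3 [cx,cX,cx]) * C.P.c 1 3) = Λ C (C.P.c 1 3 * ιw C.P (wd 3 [cx,cX,cx])) := by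
  rw [ι_mul_c C 3 1 3 [cx,cX,cx] (by decide) (by decide) (by decide) (by decide) (by decide)]
  rw [c_mul_ι C 1 3 [cx,cX,cx] (by decide) (by decide)]
  rw [lamv C 3 _ _ (by decide), lamv C 1 _ _ (by decide)]
  rw [if_neg (by decide), if_neg (by decide)]

lemma thB_x_1 : Λ C (ιw C.P (wd 3 [cy,cY,cx]) * C.P.c 1 3) = Λ C (C.P.c 1 3 * ιw C.P (wd 3 [cy,cY,cx])) := by
  rw [ι_mul_c C 3 1 3 [cy,cY,cx] (by decide) (by decide) (by decide) (by decide) (by decide)]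
  rw [c_mul_ι C 1 3 [cy,cY,cx] (by decide) (by decide)]
  rw [lamv C 3 _ _ (by decide), lamv C 1 _ _ (by decide)]
  rw [if_pos (by decide), if_pos (by decide)]

lemma thB_x_2 : Λ C (ιw C.P (wd 3 [cz,cZ,cx]) * C.P.c 1 3) = Λ C (C.P.c 1 3 * ιw C.P (wd 3 [cz,cZ,cx])) := by
  rw [ι_mul_c C 3 1 3 [cz,cZ,cx] (by decide) (by decide) (by decide) (by decide) (by decide)]
  rw [c_mul_ι C 1 3 [cz,cZ,cx] (by decide) (by decide)]
  rw [lamv C 3 _ _ (by decide), lamv C 1 _ _ (by decide)]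
  rw [if_pos (by decide), if_pos (by decide)]

def genSetB_x : Set C.P.T := {ιw C.P (wd 3 [cx,cX,cx]), ιw C.P (wd 3 [cy,cY,cx]), ιw C.P (wd 3 [cz,cZ,cx])}

lemma claimB_x (t : C.P.T) (ht : t ∈ Submodule.span K (genSetB_x C)) :
    Λ C (t * C.P.c 1 3) = Λ C (C.P.c 1 3 * t) := by
  induction ht using Submodule.span_induction with
  | mem x hx =>
      simp only [genSetB_x, Set.mem_insert_iff, Set.mem_singleton_iff] at hx
      rcases hx with rfl|rfl|rfl
      · exact thB_x_0 C
      · exact thB_x_1 C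
      · exact thB_x_2 C
  | zero => rw [zero_mul, mul_zero]
  | add x y _ _ h1 h2 => rw [add_mul, mul_add, map_add, map_add, h1, h2]
  | smul a x _ h1 => rw [smul_mul_assoc, mul_smul_comm, map_smul, map_smul, h1]

lemma thB_X_0 : Λ C (ιw C.P (wd 1 [cX,cx,cX]) * C.P.c 3 1) = Λ C (C.P.c 3 1 * ιw C.P (wd 1 [cX,cx,cX])) := by
  rw [ι_mul_c C 1 3 1 [cX,cx,cX] (by decide) (by decide) (by decide) (by decide) (by decide)]
  rw [c_mul_ι C 3 1 [cX,cx,cX] (by decide) (by decide)]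
  rw [lamv C 1 _ _ (by decide), lamv C 3 _ _ (by decide)]
  rw [if_neg (by decide), if_neg (by decide)]

lemma thB_X_1 : Λ C (ιw C.P (wd 1 [cX,cy,cY]) * C.P.c 3 1) = Λ C (C.P.c 3 1 * ιw C.P (wd 1 [cX,cy,cY])) := by
  rw [ι_mul_c C 1 3 1 [cX,cy,cY] (by decide) (by decide) (by decide) (by decide) (by decide)]
  rw [c_mul_ι C 3 1 [cX,cy,cY] (by decide) (by decide)]
  rw [lamv C 1 _ _ (by decide), lamv C 3 _ _ (by decide)]
  rw [if_pos (by decide), if_pos (by decide)]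

lemma thB_X_2 : Λ C (ιw C.P (wd 1 [cX,cz,cZ]) * C.P.c 3 1) = Λ C (C.P.c 3 1 * ιw C.P (wd 1 [cX,cz,cZ])) := by
  rw [ι_mul_c C 1 3 1 [cX,cz,cZ] (by decide) (by decide) (by decide) (by decide) (by decide)]
  rw [c_mul_ι C 3 1 [cX,cz,cZ] (by decide) (by decide)]
  rw [lamv C 1 _ _ (by decide), lamv C 3 _ _ (by decide)]
  rw [if_pos (by decide), if_pos (by decide)]

def genSetB_X : Set C.P.T := {ιw C.P (wd 1 [cX,cx,cX]), ιw C.P (wd 1 [cX,cy,cY]), ιw C.P (wd 1 [cX,cz,cZ])}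

lemma claimB_X (t : C.P.T) (ht : t ∈ Submodule.span K (genSetB_X C)) :
    Λ C (t * C.P.c 3 1) = Λ C (C.P.c 3 1 * t) := by
  induction ht using Submodule.span_induction with
  | mem x hx =>
      simp only [genSetB_X, Set.mem_insert_iff, Set.mem_singleton_iff] at hx
      rcases hx with rfl|rfl|rfl
      · exact thB_X_0 C
      · exact thB_X_1 C
      · exact thB_X_2 C
  | zero => rw [zero_mul, mul_zero]
  | add x y _ _ h1 h2 => rw [add_mul, mul_add, map_add, map_add, h1, h2]
  | smul a x _ h1 => rw [smul_mul_assoc, mul_smul_comm, map_smul, map_smul, h1]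

lemma thB_y_0 : Λ C (ιw C.P (wd 3 [cx,cX,cy]) * C.P.c 2 3) = Λ C (C.P.c 2 3 * ιw C.P (wd 3 [cx,cX,cy])) := by
  rw [ι_mul_c C 3 2 3 [cx,cX,cy] (by decide) (by decide) (by decide) (by decide) (by decide)]
  rw [c_mul_ι C 2 3 [cx,cX,cy] (by decide) (by decide)]
  rw [lamv C 3 _ _ (by decide), lamv C 2 _ _ (by decide)]
  rw [if_pos (by decide), if_pos (by decide)]

lemma thB_y_1 : Λ C (ιw C.P (wd 3 [cy,cY,cy]) * C.P.c 2 3) = Λ C (C.P.c 2 3 * ιw C.P (wd 3 [cy,cY,cy])) := by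
  rw [ι_mul_c C 3 2 3 [cy,cY,cy] (by decide) (by decide) (by decide) (by decide) (by decide)]
  rw [c_mul_ι C 2 3 [cy,cY,cy] (by decide) (by decide)]
  rw [lamv C 3 _ _ (by decide), lamv C 2 _ _ (by decide)]
  rw [if_neg (by decide), if_neg (by decide)]

lemma thB_y_2 : Λ C (ιw C.P (wd 3 [cz,cZ,cy]) * C.P.c 2 3) = Λ C (C.P.c 2 3 * ιw C.P (wd 3 [cz,cZ,cy])) := by
  rw [ι_mul_c C 3 2 3 [cz,cZ,cy] (by decide) (by decide) (by decide) (by decide) (by decide)]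
  rw [c_mul_ι C 2 3 [cz,cZ,cy] (by decide) (by decide)]
  rw [lamv C 3 _ _ (by decide), lamv C 2 _ _ (by decide)]
  rw [if_pos (by decide), if_pos (by decide)]

def genSetB_y : Set C.P.T := {ιw C.P (wd 3 [cx,cX,cy]), ιw C.P (wd 3 [cy,cY,cy]), ιw C.P (wd 3 [cz,cZ,cy])}

lemma claimB_y (t : C.P.T) (ht : t ∈ Submodule.span K (genSetB_y C)) :
    Λ C (t * C.P.c 2 3) = Λ C (C.P.c 2 3 * t) := by
  induction ht using Submodule.span_induction with
  | mem x hx =>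
      simp only [genSetB_y, Set.mem_insert_iff, Set.mem_singleton_iff] at hx
      rcases hx with rfl|rfl|rfl
      · exact thB_y_0 C
      · exact thB_y_1 C
      · exact thB_y_2 C
  | zero => rw [zero_mul, mul_zero]
  | add x y _ _ h1 h2 => rw [add_mul, mul_add, map_add, map_add, h1, h2]
  | smul a x _ h1 => rw [smul_mul_assoc, mul_smul_comm, map_smul, map_smul, h1]

lemma thB_Y_0 : Λ C (ιw C.P (wd 2 [cY,cx,cX]) * C.P.c 3 2) = Λ C (C.P.c 3 2 * ιw C.P (wd 2 [cY,cx,cX])) := by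
  rw [ι_mul_c C 2 3 2 [cY,cx,cX] (by decide) (by decide) (by decide) (by decide) (by decide)]
  rw [c_mul_ι C 3 2 [cY,cx,cX] (by decide) (by decide)]
  rw [lamv C 2 _ _ (by decide), lamv C 3 _ _ (by decide)]
  rw [if_pos (by decide), if_pos (by decide)]

lemma thB_Y_1 : Λ C (ιw C.P (wd 2 [cY,cy,cY]) * C.P.c 3 2) = Λ C (C.P.c 3 2 * ιw C.P (wd 2 [cY,cy,cY])) := by
  rw [ι_mul_c C 2 3 2 [cY,cy,cY] (by decide) (by decide) (by decide) (by decide) (by decide)]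
  rw [c_mul_ι C 3 2 [cY,cy,cY] (by decide) (by decide)]
  rw [lamv C 2 _ _ (by decide), lamv C 3 _ _ (by decide)]
  rw [if_neg (by decide), if_neg (by decide)]

lemma thB_Y_2 : Λ C (ιw C.P (wd 2 [cY,cz,cZ]) * C.P.c 3 2) = Λ C (C.P.c 3 2 * ιw C.P (wd 2 [cY,cz,cZ])) := by
  rw [ι_mul_c C 2 3 2 [cY,cz,cZ] (by decide) (by decide) (by decide) (by decide) (by decide)]
  rw [c_mul_ι C 3 2 [cY,cz,cZ] (by decide) (by decide)]
  rw [lamv C 2 _ _ (by decide), lamv C 3 _ _ (by decide)]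
  rw [if_pos (by decide), if_pos (by decide)]

def genSetB_Y : Set C.P.T := {ιw C.P (wd 2 [cY,cx,cX]), ιw C.P (wd 2 [cY,cy,cY]), ιw C.P (wd 2 [cY,cz,cZ])}

lemma claimB_Y (t : C.P.T) (ht : t ∈ Submodule.span K (genSetB_Y C)) :
    Λ C (t * C.P.c 3 2) = Λ C (C.P.c 3 2 * t) := by
  induction ht using Submodule.span_induction with
  | mem x hx =>
      simp only [genSetB_Y, Set.mem_insert_iff, Set.mem_singleton_iff] at hx
      rcases hx with rfl|rfl|rfl
      · exact thB_Y_0 C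
      · exact thB_Y_1 C
      · exact thB_Y_2 C
  | zero => rw [zero_mul, mul_zero]
  | add x y _ _ h1 h2 => rw [add_mul, mul_add, map_add, map_add, h1, h2]
  | smul a x _ h1 => rw [smul_mul_assoc, mul_smul_comm, map_smul, map_smul, h1]

lemma thB_z_0 : Λ C (ιw C.P (wd 3 [cx,cX,cz]) * C.P.c 4 3) = Λ C (C.P.c 4 3 * ιw C.P (wd 3 [cx,cX,cz])) := by
  rw [ι_mul_c C 3 4 3 [cx,cX,cz] (by decide) (by decide) (by decide) (by decide) (by decide)]
  rw [c_mul_ι C 4 3 [cx,cX,cz] (by decide) (by decide)]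
  rw [lamv C 3 _ _ (by decide), lamv C 4 _ _ (by decide)]
  rw [if_pos (by decide), if_pos (by decide)]

lemma thB_z_1 : Λ C (ιw C.P (wd 3 [cy,cY,cz]) * C.P.c 4 3) = Λ C (C.P.c 4 3 * ιw C.P (wd 3 [cy,cY,cz])) := by
  rw [ι_mul_c C 3 4 3 [cy,cY,cz] (by decide) (by decide) (by decide) (by decide) (by decide)]
  rw [c_mul_ι C 4 3 [cy,cY,cz] (by decide) (by decide)]
  rw [lamv C 3 _ _ (by decide), lamv C 4 _ _ (by decide)]
  rw [if_pos (by decide), if_pos (by decide)]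

lemma thB_z_2 : Λ C (ιw C.P (wd 3 [cz,cZ,cz]) * C.P.c 4 3) = Λ C (C.P.c 4 3 * ιw C.P (wd 3 [cz,cZ,cz])) := by
  rw [ι_mul_c C 3 4 3 [cz,cZ,cz] (by decide) (by decide) (by decide) (by decide) (by decide)]
  rw [c_mul_ι C 4 3 [cz,cZ,cz] (by decide) (by decide)]
  rw [lamv C 3 _ _ (by decide), lamv C 4 _ _ (by decide)]
  rw [if_neg (by decide), if_neg (by decide)]

def genSetB_z : Set C.P.T := {ιw C.P (wd 3 [cx,cX,cz]), ιw C.P (wd 3 [cy,cY,cz]), ιw C.P (wd 3 [cz,cZ,cz])}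

lemma claimB_z (t : C.P.T) (ht : t ∈ Submodule.span K (genSetB_z C)) :
    Λ C (t * C.P.c 4 3) = Λ C (C.P.c 4 3 * t) := by
  induction ht using Submodule.span_induction with
  | mem x hx =>
      simp only [genSetB_z, Set.mem_insert_iff, Set.mem_singleton_iff] at hx
      rcases hx with rfl|rfl|rfl
      · exact thB_z_0 C
      · exact thB_z_1 C
      · exact thB_z_2 C
  | zero => rw [zero_mul, mul_zero]
  | add x y _ _ h1 h2 => rw [add_mul, mul_add, map_add, map_add, h1, h2]
  | smul a x _ h1 => rw [smul_mul_assoc, mul_smul_comm, map_smul, map_smul, h1]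

lemma thB_Z_0 : Λ C (ιw C.P (wd 4 [cZ,cx,cX]) * C.P.c 3 4) = Λ C (C.P.c 3 4 * ιw C.P (wd 4 [cZ,cx,cX])) := by
  rw [ι_mul_c C 4 3 4 [cZ,cx,cX] (by decide) (by decide) (by decide) (by decide) (by decide)]
  rw [c_mul_ι C 3 4 [cZ,cx,cX] (by decide) (by decide)]
  rw [lamv C 4 _ _ (by decide), lamv C 3 _ _ (by decide)]
  rw [if_pos (by decide), if_pos (by decide)]

lemma thB_Z_1 : Λ C (ιw C.P (wd 4 [cZ,cy,cY]) * C.P.c 3 4) = Λ C (C.P.c 3 4 * ιw C.P (wd 4 [cZ,cy,cY])) := by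
  rw [ι_mul_c C 4 3 4 [cZ,cy,cY] (by decide) (by decide) (by decide) (by decide) (by decide)]
  rw [c_mul_ι C 3 4 [cZ,cy,cY] (by decide) (by decide)]
  rw [lamv C 4 _ _ (by decide), lamv C 3 _ _ (by decide)]
  rw [if_pos (by decide), if_pos (by decide)]

lemma thB_Z_2 : Λ C (ιw C.P (wd 4 [cZ,cz,cZ]) * C.P.c 3 4) = Λ C (C.P.c 3 4 * ιw C.P (wd 4 [cZ,cz,cZ])) := by
  rw [ι_mul_c C 4 3 4 [cZ,cz,cZ] (by decide) (by decide) (by decide) (by decide) (by decide)]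
  rw [c_mul_ι C 3 4 [cZ,cz,cZ] (by decide) (by decide)]
  rw [lamv C 4 _ _ (by decide), lamv C 3 _ _ (by decide)]
  rw [if_neg (by decide), if_neg (by decide)]

def genSetB_Z : Set C.P.T := {ιw C.P (wd 4 [cZ,cx,cX]), ιw C.P (wd 4 [cZ,cy,cY]), ιw C.P (wd 4 [cZ,cz,cZ])}

lemma claimB_Z (t : C.P.T) (ht : t ∈ Submodule.span K (genSetB_Z C)) :
    Λ C (t * C.P.c 3 4) = Λ C (C.P.c 3 4 * t) := by
  induction ht using Submodule.span_induction with
  | mem x hx =>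
      simp only [genSetB_Z, Set.mem_insert_iff, Set.mem_singleton_iff] at hx
      rcases hx with rfl|rfl|rfl
      · exact thB_Z_0 C
      · exact thB_Z_1 C
      · exact thB_Z_2 C
  | zero => rw [zero_mul, mul_zero]
  | add x y _ _ h1 h2 => rw [add_mul, mul_add, map_add, map_add, h1, h2]
  | smul a x _ h1 => rw [smul_mul_assoc, mul_smul_comm, map_smul, map_smul, h1]

end St2
set_option maxHeartbeats 2000000 in
theorem St2.statement2' (K : Type) [Field K] (hK : ringChar K = 2)
    (P : DnPres K 4) (d : P.T →ₗ[K] P.T) (hd : IsDnDiff P d 0)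
    (d₃ : P.T →ₗ[K] P.T)
    (hd₃l : ∀ i, i ≠ 3 → d₃ (P.l i) = 0)
    (hd₃l3 : d₃ (P.l 3) = -(P.c 3 1 * P.c 1 3 * P.c 3 2 * P.c 2 3)) :
    ¬ ∃ φ : P.T →ₗ[K] P.T,
      (∀ x y : P.T, φ (x * y) = φ x * y + x * φ y) ∧
      (∀ (i : ℕ) (x : P.T), φ (P.e i * x) = P.e i * φ x ∧ φ (x * P.e i) = φ x * P.e i) ∧
      (∀ (m : ℤ) (x : P.T), x ∈ P.g m → φ x ∈ P.g m) ∧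
      (∀ (p : ℕ) (x : P.T), x ∈ P.w p → φ x ∈ P.w (p + 2)) ∧
      (∀ x : P.T, d (φ x) - φ (d x) = d₃ x) := by
  rintro ⟨φ, hleib, hklin, hdeg, hwl, heq⟩
  obtain ⟨f, ⟨hfe, hfc, hfl⟩, -⟩ := P.free (St2.S K) (St2.εop K) (St2.γop K) (St2.δop K)
    (St2.εop_zero K) (St2.γop_zero K) (St2.δop_zero K) (St2.εop_idem K) (St2.εop_orth K)
    (St2.εop_sum K) (fun i j => ⟨St2.εγ K i j, St2.γε K i j⟩)
    (fun i => ⟨St2.εδ K i, St2.δε K i⟩)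
  haveI : CharP K 2 := hK ▸ ringChar.charP K
  have h2K : (2 : K) = 0 := by exact_mod_cast CharP.cast_eq_zero K 2
  obtain ⟨-, -, hdleib, hde, hdc, hdl1, hdl2, hdl3q, -, hdl4⟩ := hd
  set C : St2.Ctx K := ⟨P, d, f, hfe, hfc, hfl, h2K, hdleib, hde, hdc, hdl1, hdl2,
    (by rw [hdl3q, zero_smul, sub_zero]), (by simpa using hdl4)⟩ with hC
  -- memberships for the c-generators
  have hgx : φ (P.c 3 1) ∈ P.g (-(0:ℤ)) := by simpa using hdeg 0 _ (P.c_g 3 1)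
  have hwx : φ (P.c 3 1) ∈ P.w 3 := hwl 1 _ (P.c_w 3 1)
  have hsx : P.e 3 * φ (P.c 3 1) * P.e 1 = φ (P.c 3 1) := by
    have h1 := (hklin 3 (P.c 3 1)).1
    rw [(P.c_comp 3 1).1] at h1
    have h2 := (hklin 1 (P.c 3 1)).2
    rw [(P.c_comp 3 1).2] at h2
    rw [← h1, ← h2]
  have hmx : φ (P.c 3 1) ∈ Submodule.span K (St2.genSetB_x C) := by
    refine Submodule.span_mono ?_ (St2.tgt_0_3_1 P hgx hwx hsx)
    intro t ht
    simp only [St2.genSetB_x, Set.mem_insert_iff, Set.mem_singleton_iff] at ht ⊢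
    tauto
  have hBx : St2.Λ C (φ (P.c 3 1) * P.c 1 3) = St2.Λ C (P.c 1 3 * φ (P.c 3 1)) :=
    St2.claimB_x C _ hmx
  have hgX : φ (P.c 1 3) ∈ P.g (-(0:ℤ)) := by simpa using hdeg 0 _ (P.c_g 1 3)
  have hwX : φ (P.c 1 3) ∈ P.w 3 := hwl 1 _ (P.c_w 1 3)
  have hsX : P.e 1 * φ (P.c 1 3) * P.e 3 = φ (P.c 1 3) := by
    have h1 := (hklin 1 (P.c 1 3)).1
    rw [(P.c_comp 1 3).1] at h1
    have h2 := (hklin 3 (P.c 1 3)).2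
    rw [(P.c_comp 1 3).2] at h2
    rw [← h1, ← h2]
  have hmX : φ (P.c 1 3) ∈ Submodule.span K (St2.genSetB_X C) := by
    refine Submodule.span_mono ?_ (St2.tgt_0_1_3 P hgX hwX hsX)
    intro t ht
    simp only [St2.genSetB_X, Set.mem_insert_iff, Set.mem_singleton_iff] at ht ⊢
    tauto
  have hBX : St2.Λ C (φ (P.c 1 3) * P.c 3 1) = St2.Λ C (P.c 3 1 * φ (P.c 1 3)) :=
    St2.claimB_X C _ hmX
  have hgy : φ (P.c 3 2) ∈ P.g (-(0:ℤ)) := by simpa using hdeg 0 _ (P.c_g 3 2)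
  have hwy : φ (P.c 3 2) ∈ P.w 3 := hwl 1 _ (P.c_w 3 2)
  have hsy : P.e 3 * φ (P.c 3 2) * P.e 2 = φ (P.c 3 2) := by
    have h1 := (hklin 3 (P.c 3 2)).1
    rw [(P.c_comp 3 2).1] at h1
    have h2 := (hklin 2 (P.c 3 2)).2
    rw [(P.c_comp 3 2).2] at h2
    rw [← h1, ← h2]
  have hmy : φ (P.c 3 2) ∈ Submodule.span K (St2.genSetB_y C) := by
    refine Submodule.span_mono ?_ (St2.tgt_0_3_2 P hgy hwy hsy)
    intro t ht
    simp only [St2.genSetB_y, Set.mem_insert_iff, Set.mem_singleton_iff] at ht ⊢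
    tauto
  have hBy : St2.Λ C (φ (P.c 3 2) * P.c 2 3) = St2.Λ C (P.c 2 3 * φ (P.c 3 2)) :=
    St2.claimB_y C _ hmy
  have hgY : φ (P.c 2 3) ∈ P.g (-(0:ℤ)) := by simpa using hdeg 0 _ (P.c_g 2 3)
  have hwY : φ (P.c 2 3) ∈ P.w 3 := hwl 1 _ (P.c_w 2 3)
  have hsY : P.e 2 * φ (P.c 2 3) * P.e 3 = φ (P.c 2 3) := by
    have h1 := (hklin 2 (P.c 2 3)).1
    rw [(P.c_comp 2 3).1] at h1
    have h2 := (hklin 3 (P.c 2 3)).2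
    rw [(P.c_comp 2 3).2] at h2
    rw [← h1, ← h2]
  have hmY : φ (P.c 2 3) ∈ Submodule.span K (St2.genSetB_Y C) := by
    refine Submodule.span_mono ?_ (St2.tgt_0_2_3 P hgY hwY hsY)
    intro t ht
    simp only [St2.genSetB_Y, Set.mem_insert_iff, Set.mem_singleton_iff] at ht ⊢
    tauto
  have hBY : St2.Λ C (φ (P.c 2 3) * P.c 3 2) = St2.Λ C (P.c 3 2 * φ (P.c 2 3)) :=
    St2.claimB_Y C _ hmY
  have hgz : φ (P.c 3 4) ∈ P.g (-(0:ℤ)) := by simpa using hdeg 0 _ (P.c_g 3 4)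
  have hwz : φ (P.c 3 4) ∈ P.w 3 := hwl 1 _ (P.c_w 3 4)
  have hsz : P.e 3 * φ (P.c 3 4) * P.e 4 = φ (P.c 3 4) := by
    have h1 := (hklin 3 (P.c 3 4)).1
    rw [(P.c_comp 3 4).1] at h1
    have h2 := (hklin 4 (P.c 3 4)).2
    rw [(P.c_comp 3 4).2] at h2
    rw [← h1, ← h2]
  have hmz : φ (P.c 3 4) ∈ Submodule.span K (St2.genSetB_z C) := by
    refine Submodule.span_mono ?_ (St2.tgt_0_3_4 P hgz hwz hsz)
    intro t ht
    simp only [St2.genSetB_z, Set.mem_insert_iff, Set.mem_singleton_iff] at ht ⊢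
    tauto
  have hBz : St2.Λ C (φ (P.c 3 4) * P.c 4 3) = St2.Λ C (P.c 4 3 * φ (P.c 3 4)) :=
    St2.claimB_z C _ hmz
  have hgZ : φ (P.c 4 3) ∈ P.g (-(0:ℤ)) := by simpa using hdeg 0 _ (P.c_g 4 3)
  have hwZ : φ (P.c 4 3) ∈ P.w 3 := hwl 1 _ (P.c_w 4 3)
  have hsZ : P.e 4 * φ (P.c 4 3) * P.e 3 = φ (P.c 4 3) := by
    have h1 := (hklin 4 (P.c 4 3)).1
    rw [(P.c_comp 4 3).1] at h1
    have h2 := (hklin 3 (P.c 4 3)).2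
    rw [(P.c_comp 4 3).2] at h2
    rw [← h1, ← h2]
  have hmZ : φ (P.c 4 3) ∈ Submodule.span K (St2.genSetB_Z C) := by
    refine Submodule.span_mono ?_ (St2.tgt_0_4_3 P hgZ hwZ hsZ)
    intro t ht
    simp only [St2.genSetB_Z, Set.mem_insert_iff, Set.mem_singleton_iff] at ht ⊢
    tauto
  have hBZ : St2.Λ C (φ (P.c 4 3) * P.c 3 4) = St2.Λ C (P.c 3 4 * φ (P.c 4 3)) :=
    St2.claimB_Z C _ hmZ
  have hgl1 : φ (P.l 1) ∈ P.g (-(1:ℤ)) := by simpa using hdeg (-1) _ (P.l_g 1)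
  have hwl1 : φ (P.l 1) ∈ P.w 3 := hwl 1 _ (P.l_w 1)
  have hsl1 : P.e 1 * φ (P.l 1) * P.e 1 = φ (P.l 1) := by
    have h1 := (hklin 1 (P.l 1)).1
    rw [(P.l_comp 1).1] at h1
    have h2 := (hklin 1 (P.l 1)).2
    rw [(P.l_comp 1).2] at h2
    rw [← h1, ← h2]
  have hml1 : φ (P.l 1) ∈ Submodule.span K (St2.genSetA_1 C) := by
    refine Submodule.span_mono ?_ (St2.tgt_1_1_1 P hgl1 hwl1 hsl1)
    intro t ht
    simp only [St2.genSetA_1, Set.mem_insert_iff, Set.mem_singleton_iff] at ht ⊢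
    tauto
  have hA1 : St2.Λ C (d (φ (P.l 1))) = 0 := St2.claimA_1 C _ hml1
  have hgl2 : φ (P.l 2) ∈ P.g (-(1:ℤ)) := by simpa using hdeg (-1) _ (P.l_g 2)
  have hwl2 : φ (P.l 2) ∈ P.w 3 := hwl 1 _ (P.l_w 2)
  have hsl2 : P.e 2 * φ (P.l 2) * P.e 2 = φ (P.l 2) := by
    have h1 := (hklin 2 (P.l 2)).1
    rw [(P.l_comp 2).1] at h1
    have h2 := (hklin 2 (P.l 2)).2
    rw [(P.l_comp 2).2] at h2
    rw [← h1, ← h2]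
  have hml2 : φ (P.l 2) ∈ Submodule.span K (St2.genSetA_2 C) := by
    refine Submodule.span_mono ?_ (St2.tgt_1_2_2 P hgl2 hwl2 hsl2)
    intro t ht
    simp only [St2.genSetA_2, Set.mem_insert_iff, Set.mem_singleton_iff] at ht ⊢
    tauto
  have hA2 : St2.Λ C (d (φ (P.l 2))) = 0 := St2.claimA_2 C _ hml2
  have hgl3 : φ (P.l 3) ∈ P.g (-(1:ℤ)) := by simpa using hdeg (-1) _ (P.l_g 3)
  have hwl3 : φ (P.l 3) ∈ P.w 3 := hwl 1 _ (P.l_w 3)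
  have hsl3 : P.e 3 * φ (P.l 3) * P.e 3 = φ (P.l 3) := by
    have h1 := (hklin 3 (P.l 3)).1
    rw [(P.l_comp 3).1] at h1
    have h2 := (hklin 3 (P.l 3)).2
    rw [(P.l_comp 3).2] at h2
    rw [← h1, ← h2]
  have hml3 : φ (P.l 3) ∈ Submodule.span K (St2.genSetA_3 C) := by
    refine Submodule.span_mono ?_ (St2.tgt_1_3_3 P hgl3 hwl3 hsl3)
    intro t ht
    simp only [St2.genSetA_3, Set.mem_insert_iff, Set.mem_singleton_iff] at ht ⊢
    tauto
  have hA3 : St2.Λ C (d (φ (P.l 3))) = 0 := St2.claimA_3 C _ hml3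
  have hgl4 : φ (P.l 4) ∈ P.g (-(1:ℤ)) := by simpa using hdeg (-1) _ (P.l_g 4)
  have hwl4 : φ (P.l 4) ∈ P.w 3 := hwl 1 _ (P.l_w 4)
  have hsl4 : P.e 4 * φ (P.l 4) * P.e 4 = φ (P.l 4) := by
    have h1 := (hklin 4 (P.l 4)).1
    rw [(P.l_comp 4).1] at h1
    have h2 := (hklin 4 (P.l 4)).2
    rw [(P.l_comp 4).2] at h2
    rw [← h1, ← h2]
  have hml4 : φ (P.l 4) ∈ Submodule.span K (St2.genSetA_4 C) := by
    refine Submodule.span_mono ?_ (St2.tgt_1_4_4 P hgl4 hwl4 hsl4)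
    intro t ht
    simp only [St2.genSetA_4, Set.mem_insert_iff, Set.mem_singleton_iff] at ht ⊢
    tauto
  have hA4 : St2.Λ C (d (φ (P.l 4))) = 0 := St2.claimA_4 C _ hml4
  have F : ∀ t, St2.Λ C (d (φ t)) - St2.Λ C (φ (d t)) = St2.Λ C (d₃ t) := by
    intro t; rw [← map_sub]; exact congrArg _ (heq t)
  have F1 := F (P.l 1); have F2 := F (P.l 2); have F3 := F (P.l 3); have F4 := F (P.l 4)
  rw [hA1, hdl1, hleib, map_add, hd₃l 1 (by norm_num), map_zero] at F1
  rw [hA2, hdl2, hleib, map_add, hd₃l 2 (by norm_num), map_zero] at F2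
  rw [hA4, show d (P.l 4) = -(P.c 4 3 * P.c 3 4) from by simpa using hdl4, map_neg,
    hleib, map_neg, map_add, hd₃l 4 (by norm_num), map_zero] at F4
  rw [hA3, show d (P.l 3) = -(P.c 3 1 * P.c 1 3) - P.c 3 2 * P.c 2 3 + P.c 3 4 * P.c 4 3
      from by rw [hdl3q, zero_smul, sub_zero],
    map_add, map_sub, map_neg, hleib, hleib, hleib, map_add, map_sub, map_neg,
    map_add, map_add, map_add, hd₃l3] at F3
  have R3 : St2.Λ C (-(P.c 3 1 * P.c 1 3 * P.c 3 2 * P.c 2 3)) = -1 := by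
    rw [map_neg, St2.c_eq C 3 1 (by decide), St2.c_eq C 1 3 (by decide),
      St2.c_eq C 3 2 (by decide), St2.c_eq C 2 3 (by decide)]
    rw [St2.ιmul C [St2.cx] [St2.cX] (by decide) (by decide) (by decide)]
    rw [St2.ιmul C ([St2.cx] ++ [St2.cX]) [St2.cy] (by decide) (by decide) (by decide)]
    rw [St2.ιmul C (([St2.cx] ++ [St2.cX]) ++ [St2.cy]) [St2.cY] (by decide) (by decide) (by decide)]
    rw [St2.lamv C 3 _ _ (by decide), if_pos (by decide)]
  rw [R3] at F3
  have hfin : (0:K) = -1 := by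
    linear_combination F1 + F2 + F3 + F4 - hBx + hBX - hBy + hBY + hBz - hBZ
  exact one_ne_zero (by linear_combination hfin)

/-- Let `K` be a field of characteristic `2` and consider the Ginzburg
DG-algebra `G_{D_4} = (T, d)` for the `D_4` tree (vertices `1,2,3,4`, central vertex
`3`), and let `d₃` be the degree `+1` `k`-linear derivation of `T` vanishing on all
generators except `d₃(ℓ₃) = −c_{31}c_{13}c_{32}c_{23}`.  Then there is no `k`-linear
derivation `φ` of `T` which preserves total degree, raises word length by exactly `2`,
and satisfies `d₃ = d∘φ − φ∘d`.  (Consequently the obstruction class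
`[d̃₃] ∈ HH²(G_{D_4}, G_{D_4}[−2])` is nonzero in characteristic `2`.) -/
theorem statement2 (K : Type) [Field K] (hK : ringChar K = 2)
    (P : DnPres K 4) (d : P.T →ₗ[K] P.T) (hd : IsDnDiff P d 0)
    (d₃ : P.T →ₗ[K] P.T)
    (hd₃deg : ∀ (m : ℤ) (x : P.T), x ∈ P.g m → d₃ x ∈ P.g (m + 1))
    (hd₃w : ∀ (p : ℕ) (x : P.T), x ∈ P.w p → d₃ x ∈ P.w (p + 3))
    (hd₃leib : ∀ (m : ℤ) (x : P.T), x ∈ P.g m → ∀ y : P.T,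
      d₃ (x * y) = d₃ x * y + negOneZ m • (x * d₃ y))
    (hd₃e : ∀ i, d₃ (P.e i) = 0)
    (hd₃c : ∀ i j, d₃ (P.c i j) = 0)
    (hd₃l : ∀ i, i ≠ 3 → d₃ (P.l i) = 0)
    (hd₃l3 : d₃ (P.l 3) = -(P.c 3 1 * P.c 1 3 * P.c 3 2 * P.c 2 3)) :
    ¬ ∃ φ : P.T →ₗ[K] P.T,
      -- `φ` is a derivation (of degree `0`, so the graded Leibniz rule has no signs)
      (∀ x y : P.T, φ (x * y) = φ x * y + x * φ y) ∧
      -- `φ` is `k`-linear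
      (∀ (i : ℕ) (x : P.T), φ (P.e i * x) = P.e i * φ x ∧ φ (x * P.e i) = φ x * P.e i) ∧
      -- `φ` preserves the total degree
      (∀ (m : ℤ) (x : P.T), x ∈ P.g m → φ x ∈ P.g m) ∧
      -- `φ` raises word length by exactly `2`
      (∀ (p : ℕ) (x : P.T), x ∈ P.w p → φ x ∈ P.w (p + 2)) ∧
      -- `d₃ = d ∘ φ − φ ∘ d`
      (∀ x : P.T, d (φ x) - φ (d x) = d₃ x) := by
  exact St2.statement2' K hK P d hd d₃ hd₃l hd₃l3
end

section
/- Let K be any field and Γ a finite tree (with edges oriented arbitrarily to form a quiver). The zigzag algebra A_Γ is a quadratic algebra A_Γ = T_k V/(J), where V is the k-bimodule spanned by the arrows of the double quiver DΓ placed in internal degree 1 and J ⊂ V ⊗_k V is spanned by the defining relations. Its quadratic dual A_Γ^! = T_k(V^∨[−1])/(J^⊥[−2]) is isomorphic, as a graded algebra, to the preprojective algebra Π_Γ equipped with its path-length grading. -/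
section

variable {V : Type} [Fintype V] [DecidableEq V] (G : SimpleGraph V) [DecidableRel G.Adj]

/-- The arrows of the double quiver `DΓ` of the tree `Γ`: ordered adjacent pairs `(u,v)`,
where the arrow `a_{uv}` satisfies `a_{uv} ∈ e_u ⬝ A_Γ ⬝ e_v`. -/
def Arr : Type := {p : V × V // G.Adj p.1 p.2}

instance : Fintype (Arr G) := by unfold Arr; infer_instance
instance : DecidableEq (Arr G) := by unfold Arr; infer_instance

/-- Composable pairs of arrows: the basis of the degree-`2` part `V ⊗_k V` of the tensor
algebra `T_k V` on the arrow bimodule `V`. -/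
def CompPair : Type := {q : Arr G × Arr G // (q.1).val.2 = (q.2).val.1}

/-- Composable pairs of dual arrows: the basis of the degree-`2` part
`V^∨ ⊗_k V^∨` of `T_k (V^∨[−1])`; the pair `(b, a)` stands for `b^∨ ⊗ a^∨`, where the
dual arrow `a^∨` of `a = a_{uv}` satisfies `a^∨ ∈ e_v ⬝ A_Γ^! ⬝ e_u`. -/
def DualPair : Type := {q : Arr G × Arr G // (q.2).val.2 = (q.1).val.1}

instance : Fintype (CompPair G) := by unfold CompPair; infer_instance
instance : DecidableEq (CompPair G) := by unfold CompPair; infer_instance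
instance : Fintype (DualPair G) := by unfold DualPair; infer_instance
instance : DecidableEq (DualPair G) := by unfold DualPair; infer_instance

/-- The bijection `(x, y) ↦ (y, x)` matching a composable pair with the dual pair that
pairs nontrivially against it. -/
def dswap : CompPair G → DualPair G := fun q => ⟨(q.val.2, q.val.1), q.property⟩

variable (K : Type) [Field K]

/-- The indicator basis vector of a composable pair. -/
def indC (q0 : CompPair G) : CompPair G → K := fun q => if q = q0 then 1 else 0

/-- The canonical pairing between `V^∨ ⊗_k V^∨` and `V ⊗_k V`, sending
`b^∨ ⊗ a^∨ ⊗ x ⊗ y` to `(−1)^{|b|} b^∨(y) a^∨(x) = −δ_{b,y} δ_{a,x}` (all arrows have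
internal degree `1`). -/
def quadPairing (φ : DualPair G → K) (ψ : CompPair G → K) : K :=
  -∑ q : CompPair G, φ (dswap G q) * ψ q

/-- The space `J ⊆ V ⊗_k V` of quadratic relations of the zigzag algebra `A_Γ`: the span
of the compositions `a_{uv} ⊗ a_{vw}` (`u ≠ w`) and of the differences
`a_{vw} ⊗ a_{wv} − a_{vu} ⊗ a_{uv}`. -/
def zigzagJ : Submodule K (CompPair G → K) :=
  Submodule.span K
    ({ψ | ∃ (u v w : V) (h1 : G.Adj u v) (h2 : G.Adj v w), u ≠ w ∧
        ψ = indC G K ⟨(⟨(u, v), h1⟩, ⟨(v, w), h2⟩), rfl⟩} ∪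
     {ψ | ∃ (v u w : V) (h1 : G.Adj v u) (h2 : G.Adj v w),
        ψ = indC G K ⟨(⟨(v, w), h2⟩, ⟨(w, v), h2.symm⟩), rfl⟩
           - indC G K ⟨(⟨(v, u), h1⟩, ⟨(u, v), h1.symm⟩), rfl⟩})


end

open Finset in
lemma treeDistAdj {V : Type} [DecidableEq V] (G : SimpleGraph V) (hG : G.IsTree) (r u v : V)
    (h : G.Adj u v) : G.dist r u + 1 = G.dist r v ∨ G.dist r v + 1 = G.dist r u := by
  have hc := hG.isConnected
  have h1 : G.dist r u ≤ G.dist r v + 1 := by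
    have := hc.dist_triangle (u := r) (v := v) (w := u)
    rwa [SimpleGraph.dist_comm (u := v) (v := u), (SimpleGraph.dist_eq_one_iff_adj).2 h] at this
  have h2 : G.dist r v ≤ G.dist r u + 1 := by
    have := hc.dist_triangle (u := r) (v := u) (w := v)
    rwa [(SimpleGraph.dist_eq_one_iff_adj).2 h] at this
  have hne : G.dist r u ≠ G.dist r v := by
    intro heq
    obtain ⟨p, hp, hpl⟩ := hc.exists_path_of_dist r u
    obtain ⟨q, hq, hql⟩ := hc.exists_path_of_dist r v
    by_cases hvp : v ∈ p.support
    · have hle : G.dist r v ≤ (p.takeUntil v hvp).length := SimpleGraph.dist_le _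
      have hle2 : (p.takeUntil v hvp).length ≤ p.length :=
        SimpleGraph.Walk.length_takeUntil_le p hvp
      have hspec := SimpleGraph.Walk.take_spec p hvp
      have hlen := congrArg SimpleGraph.Walk.length hspec
      rw [SimpleGraph.Walk.length_append] at hlen
      have hdrop : (p.dropUntil v hvp).length = 0 := by omega
      exact h.ne' (SimpleGraph.Walk.eq_of_length_eq_zero hdrop)
    · have hp' : (p.concat h).IsPath := by
        rw [SimpleGraph.Walk.isPath_def, SimpleGraph.Walk.support_concat]
        exact List.concat_eq_append ▸ List.Nodup.concat hvp hp.support_nodup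
      have := hG.IsAcyclic.path_unique ⟨p.concat h, hp'⟩ ⟨q, hq⟩
      have hl := congrArg (fun P : G.Path r v => P.val.length) this
      simp only [SimpleGraph.Walk.length_concat] at hl
      omega
  omega

section
variable {V : Type} [Fintype V] [DecidableEq V] (G : SimpleGraph V) [DecidableRel G.Adj]

/-- The loop dual pair attached to an adjacency `h : G.Adj u v`. -/
def loopq {u v : V} (h : G.Adj u v) : DualPair G :=
  ⟨(⟨(v, u), h.symm⟩, ⟨(u, v), h⟩), rfl⟩

lemma DualPair.ext' {q q' : DualPair G} (h1 : q.val.1.val = q'.val.1.val)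
    (h2 : q.val.2.val = q'.val.2.val) : q = q' :=
  Subtype.ext (Prod.ext (Subtype.ext h1) (Subtype.ext h2))

lemma sum_dualpair {M : Type} [AddCommMonoid M] (F : DualPair G → M)
    (h0 : ∀ q : DualPair G, q.val.1.val ≠ (q.val.2.val.2, q.val.2.val.1) → F q = 0) :
    ∑ q : DualPair G, F q
      = ∑ p : V × V, if h : G.Adj p.1 p.2 then F (loopq G h) else 0 := by
  classical
  have hL : ∑ q : DualPair G, F q
      = ∑ q ∈ Finset.univ.filter
          (fun q : DualPair G => q.val.1.val = (q.val.2.val.2, q.val.2.val.1)), F q := by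
    refine (Finset.sum_subset (Finset.filter_subset _ _) ?_).symm
    intro q _ hq
    simp only [Finset.mem_filter, Finset.mem_univ, true_and] at hq
    exact h0 q hq
  have hR : ∑ p : V × V, (if h : G.Adj p.1 p.2 then F (loopq G h) else 0)
      = ∑ p ∈ Finset.univ.filter (fun p : V × V => G.Adj p.1 p.2),
          (if h : G.Adj p.1 p.2 then F (loopq G h) else 0) := by
    refine (Finset.sum_subset (Finset.filter_subset _ _) ?_).symm
    intro p _ hp
    simp only [Finset.mem_filter, Finset.mem_univ, true_and] at hp
    exact dif_neg hp
  rw [hL, hR]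
  refine Finset.sum_bij (fun q _ => (q.val.2.val : V × V)) ?_ ?_ ?_ ?_
  · intro q hq
    simp only [Finset.mem_filter, Finset.mem_univ, true_and]
    exact q.val.2.prop
  · intro q hq q' hq' hval
    simp only [Finset.mem_filter, Finset.mem_univ, true_and] at hq hq'
    have hval' : (q.val.2.val : V × V) = q'.val.2.val := hval
    exact DualPair.ext' G (by rw [hq, hq', hval']) hval'
  · intro p hp
    simp only [Finset.mem_filter, Finset.mem_univ, true_and] at hp
    exact ⟨loopq G hp, Finset.mem_filter.2 ⟨Finset.mem_univ _, rfl⟩, rfl⟩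
  · intro q hq
    simp only [Finset.mem_filter, Finset.mem_univ, true_and] at hq
    rw [dif_pos q.val.2.prop]
    congr 1
    exact DualPair.ext' G hq rfl

end

/-- Generic description of the graded pieces of a graded algebra generated by
idempotents in degree 0 and "arrows" in degree 1. -/
lemma gradedPieces {V : Type} [Fintype V] [DecidableEq V] (K R : Type) [Field K] [Ring R]
    [Algebra K R] (ε : V → R) (c : V → V → R) (gr : ℕ → Submodule K R)
    (hidem : ∀ v, ε v * ε v = ε v)
    (horth : ∀ v w, v ≠ w → ε v * ε w = 0)
    (hsum : ∑ v : V, ε v = 1)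
    (hcomp : ∀ v w, ε v * c v w = c v w ∧ c v w * ε w = c v w)
    (hinternal : DirectSum.IsInternal gr)
    (hmul : ∀ (d₁ d₂ : ℕ) (x y : R), x ∈ gr d₁ → y ∈ gr d₂ → x * y ∈ gr (d₁ + d₂))
    (hε : ∀ v, ε v ∈ gr 0) (hc : ∀ v w, c v w ∈ gr 1)
    (hgen : ∀ x : R, x ∈ Algebra.adjoin K (Set.range ε ∪ {x | ∃ v w, x = c v w})) :
    ∃ W : ℕ → Submodule K R,
      W 0 = Submodule.span K (Set.range ε) ∧
      (∀ s, W (s+1) = Submodule.span K {x | ∃ v w y, y ∈ W s ∧ x = c v w * y}) ∧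
      ∀ s, gr s = W s := by
  classical
  let W : ℕ → Submodule K R := fun s => Nat.rec (Submodule.span K (Set.range ε))
    (fun _ Ws => Submodule.span K {x | ∃ v w y, y ∈ Ws ∧ x = c v w * y}) s
  have W0 : W 0 = Submodule.span K (Set.range ε) := rfl
  have Wsucc : ∀ s, W (s+1) = Submodule.span K {x | ∃ v w y, y ∈ W s ∧ x = c v w * y} :=
    fun s => rfl
  refine ⟨W, W0, Wsucc, ?_⟩
  -- W s ≤ gr s
  have hWgr : ∀ s, W s ≤ gr s := by
    intro s
    induction s with
    | zero =>
      rw [W0]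
      refine Submodule.span_le.2 ?_
      rintro x ⟨v, rfl⟩; exact hε v
    | succ s ih =>
      rw [Wsucc]
      refine Submodule.span_le.2 ?_
      rintro x ⟨v, w, y, hy, rfl⟩
      have := hmul 1 s _ _ (hc v w) (ih hy)
      simpa [Nat.add_comm] using this
  -- multiplying by an idempotent preserves W t
  have hεW : ∀ (v : V) (t : ℕ) (z : R), z ∈ W t → ε v * z ∈ W t := by
    intro v t
    cases t with
    | zero =>
      intro z hz
      rw [W0] at hz ⊢
      induction hz using Submodule.span_induction with
      | mem x hx =>
        obtain ⟨w, rfl⟩ := hx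
        by_cases hvw : v = w
        · subst hvw; rw [hidem]; exact Submodule.subset_span ⟨v, rfl⟩
        · rw [horth v w hvw]; exact Submodule.zero_mem _
      | zero => rw [mul_zero]; exact Submodule.zero_mem _
      | add x y _ _ hx hy => rw [mul_add]; exact Submodule.add_mem _ hx hy
      | smul a x _ hx => rw [mul_smul_comm]; exact Submodule.smul_mem _ _ hx
    | succ s =>
      intro z hz
      rw [Wsucc] at hz ⊢
      induction hz using Submodule.span_induction with
      | mem x hx =>
        obtain ⟨v', w, y, hy, rfl⟩ := hx
        rw [← mul_assoc, ← (hcomp v' w).1, ← mul_assoc]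
        by_cases hvv : v = v'
        · subst hvv; rw [hidem, (hcomp v w).1]
          exact Submodule.subset_span ⟨v, w, y, hy, rfl⟩
        · rw [horth v v' hvv, zero_mul, zero_mul]; exact Submodule.zero_mem _
      | zero => rw [mul_zero]; exact Submodule.zero_mem _
      | add x y _ _ hx hy => rw [mul_add]; exact Submodule.add_mem _ hx hy
      | smul a x _ hx => rw [mul_smul_comm]; exact Submodule.smul_mem _ _ hx
  -- multiplication adds degrees
  have hmulW : ∀ (s : ℕ) (x : R), x ∈ W s → ∀ (t : ℕ) (z : R), z ∈ W t → x * z ∈ W (s + t) := by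
    intro s
    induction s with
    | zero =>
      intro x hx t z hz
      rw [W0] at hx
      rw [Nat.zero_add]
      induction hx using Submodule.span_induction with
      | mem x' hx' => obtain ⟨v, rfl⟩ := hx'; exact hεW v t z hz
      | zero => rw [zero_mul]; exact Submodule.zero_mem _
      | add a b _ _ ha hb => rw [add_mul]; exact Submodule.add_mem _ ha hb
      | smul a x' _ hx' => rw [smul_mul_assoc]; exact Submodule.smul_mem _ _ hx'
    | succ s ih =>
      intro x hx t z hz
      rw [Wsucc] at hx
      induction hx using Submodule.span_induction with
      | mem x' hx' =>
        obtain ⟨v, w, y, hy, rfl⟩ := hx'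
        rw [mul_assoc]
        have := ih y hy t z hz
        have : c v w * (y * z) ∈ W (s + t + 1) :=
          (Wsucc (s+t)) ▸ Submodule.subset_span ⟨v, w, y * z, this, rfl⟩
        have harith : s + 1 + t = s + t + 1 := by omega
        rw [harith]; exact this
      | zero => rw [zero_mul]; exact Submodule.zero_mem _
      | add a b _ _ ha hb => rw [add_mul]; exact Submodule.add_mem _ ha hb
      | smul a x' _ hx' => rw [smul_mul_assoc]; exact Submodule.smul_mem _ _ hx'
  -- the union of the W s is everything
  set U : Submodule K R := ⨆ s, W s with hUdef
  have hWU : ∀ s, W s ≤ U := fun s => le_iSup W s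
  have hone : (1 : R) ∈ U := by
    rw [← hsum]
    exact Submodule.sum_mem _ (fun v _ => hWU 0 (Submodule.subset_span ⟨v, rfl⟩))
  have hUmul : ∀ x ∈ U, ∀ z ∈ U, x * z ∈ U := by
    intro x hx z hz
    refine Submodule.iSup_induction (motive := fun x => x * z ∈ U) W hx ?_ ?_ ?_
    · intro s x' hx'
      refine Submodule.iSup_induction (motive := fun z => x' * z ∈ U) W hz ?_ ?_ ?_
      · intro t z' hz'
        exact hWU (s + t) (hmulW s x' hx' t z' hz')
      · simp only [mul_zero]; exact Submodule.zero_mem _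
      · intro a b ha hb; simp only [mul_add]; exact Submodule.add_mem _ ha hb
    · simp only [zero_mul]; exact Submodule.zero_mem _
    · intro a b ha hb; simp only [add_mul]; exact Submodule.add_mem _ ha hb
  have hUtop : ∀ x : R, x ∈ U := by
    intro x
    let Ualg : Subalgebra K R :=
      { carrier := U
        mul_mem' := fun ha hb => hUmul _ ha _ hb
        add_mem' := fun ha hb => Submodule.add_mem _ ha hb
        one_mem' := hone
        algebraMap_mem' := fun r =>
          show algebraMap K R r ∈ U by
            rw [Algebra.algebraMap_eq_smul_one]
            exact Submodule.smul_mem _ _ hone }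
    have hle : Algebra.adjoin K (Set.range ε ∪ {x | ∃ v w, x = c v w}) ≤ Ualg := by
      refine Algebra.adjoin_le ?_
      rintro x (⟨v, rfl⟩ | ⟨v, w, rfl⟩)
      · exact hWU 0 (Submodule.subset_span ⟨v, rfl⟩)
      · have : c v w * ε w ∈ W 1 :=
          (Wsucc 0) ▸ Submodule.subset_span ⟨v, w, ε w, Submodule.subset_span ⟨w, rfl⟩, rfl⟩
        rw [(hcomp v w).2] at this
        exact hWU 1 this
    exact hle (hgen x)
  -- conclude
  intro s
  refine le_antisymm ?_ (hWgr s)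
  intro x hx
  obtain ⟨f, hf, hfsum⟩ := (Submodule.mem_iSup_iff_exists_finsupp W x).1 (hUtop x)
  have hind := hinternal.submodule_iSupIndep
  have hdisj := (iSupIndep_def.mp hind) s
  have hxf : x - f s ∈ gr s := sub_mem hx (hWgr s (hf s))
  have hsum2 : x - f s = ∑ i ∈ f.support.erase s, f i := by
    by_cases hs : s ∈ f.support
    · have := Finset.add_sum_erase f.support (fun i => f i) hs
      rw [Finsupp.sum] at hfsum
      rw [← hfsum, ← this]
      exact add_sub_cancel_left _ _
    · have h0 : f s = 0 := Finsupp.notMem_support_iff.1 hs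
      rw [Finset.erase_eq_of_notMem hs, h0, sub_zero, ← hfsum, Finsupp.sum]
  have hmem2 : x - f s ∈ ⨆ (j) (_ : j ≠ s), gr j := by
    rw [hsum2]
    refine Submodule.sum_mem _ ?_
    intro i hi
    have hine : i ≠ s := (Finset.mem_erase.1 hi).1
    exact le_iSup₂ (f := fun (j : ℕ) (_ : j ≠ s) => gr j) i hine (hWgr i (hf i))
  have : x - f s = 0 := Submodule.disjoint_def.mp hdisj _ hxf hmem2
  rw [sub_eq_zero.mp this]
  exact hf s

/-- Let `K` be any field and `Γ` a finite tree (with edges oriented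
arbitrarily to form a quiver).  The zigzag algebra `A_Γ` is a quadratic algebra
`A_Γ = T_k V/(J)`, where `V` is the `k`-bimodule spanned by the arrows of the double
quiver `DΓ` placed in internal degree `1` and `J ⊂ V ⊗_k V` is spanned by the defining
relations.  Its quadratic dual `A_Γ^! = T_k(V^∨[−1])/(J^⊥[−2])` is isomorphic, as a
graded algebra, to the preprojective algebra `Π_Γ` equipped with its path-length
grading.

Here:
* `B = A_Γ^!` (with idempotents `eB v`, dual arrows `θ a ∈ eB a.2 ⬝ B ⬝ eB a.1` for each
  arrow `a` of `DΓ`, and path-length grading `grB`) is pinned down by its universal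
  property as the quotient of the tensor algebra `T_k(V^∨[−1])` by the orthogonal
  complement `J^⊥` of `J` under the canonical pairing `quadPairing`;
* `P = Π_Γ` (with idempotents `eP v`, arrows `χ v w`, and path-length grading `grP`) is
  pinned down by its universal property as the quotient of the path algebra of `DΓ` by
  the preprojective relations `Σ_{g ∈ Γ₁} (g*g − gg*)`. -/
theorem statement6 (K : Type) [Field K]
    (V : Type) [Fintype V] [DecidableEq V]
    (G : SimpleGraph V) [DecidableRel G.Adj] (hG : G.IsTree)
    (ornt : V → V → Prop) [instDor : ∀ v w, Decidable (ornt v w)]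
    (hor : ∀ u v, G.Adj u v ↔ (ornt u v ∨ ornt v u))
    (hor2 : ∀ u v, ornt u v → ¬ ornt v u)
    -- the quadratic dual B = A_Γ^!
    (B : Type) [Ring B] [Algebra K B]
    (eB : V → B) (θ : Arr G → B) (grB : ℕ → Submodule K B)
    (hBidem : ∀ v, eB v * eB v = eB v)
    (hBorth : ∀ v w, v ≠ w → eB v * eB w = 0)
    (hBsum : ∑ v : V, eB v = 1)
    (hBcomp : ∀ a : Arr G, eB a.val.2 * θ a = θ a ∧ θ a * eB a.val.1 = θ a)
    (hBrel : ∀ φ : DualPair G → K, (∀ ψ ∈ zigzagJ G K, quadPairing G K φ ψ = 0) →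
      ∑ q : DualPair G, φ q • (θ q.val.1 * θ q.val.2) = 0)
    (hBinternal : DirectSum.IsInternal grB)
    (hBone : (1 : B) ∈ grB 0)
    (hBmul : ∀ (d₁ d₂ : ℕ) (x y : B), x ∈ grB d₁ → y ∈ grB d₂ → x * y ∈ grB (d₁ + d₂))
    (hBe : ∀ v, eB v ∈ grB 0)
    (hBθ : ∀ a, θ a ∈ grB 1)
    (hBfree : ∀ (S : Type) [Ring S] [Algebra K S] (ε : V → S) (ϑ : Arr G → S),
      (∀ v, ε v * ε v = ε v) →
      (∀ v w, v ≠ w → ε v * ε w = 0) →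
      (∑ v : V, ε v = 1) →
      (∀ a : Arr G, ε a.val.2 * ϑ a = ϑ a ∧ ϑ a * ε a.val.1 = ϑ a) →
      (∀ φ : DualPair G → K, (∀ ψ ∈ zigzagJ G K, quadPairing G K φ ψ = 0) →
        ∑ q : DualPair G, φ q • (ϑ q.val.1 * ϑ q.val.2) = 0) →
      ∃! f : B →ₐ[K] S, (∀ v, f (eB v) = ε v) ∧ (∀ a, f (θ a) = ϑ a))
    -- the preprojective algebra P = Π_Γ
    (P : Type) [Ring P] [Algebra K P]
    (eP : V → P) (χ : V → V → P) (grP : ℕ → Submodule K P)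
    (hχ0 : ∀ v w, ¬ G.Adj v w → χ v w = 0)
    (hPidem : ∀ v, eP v * eP v = eP v)
    (hPorth : ∀ v w, v ≠ w → eP v * eP w = 0)
    (hPsum : ∑ v : V, eP v = 1)
    (hPcomp : ∀ v w, eP v * χ v w = χ v w ∧ χ v w * eP w = χ v w)
    (hPrel : ∀ v : V,
      (∑ w : V, if ornt v w then χ v w * χ w v else 0) -
      (∑ w : V, if ornt w v then χ v w * χ w v else 0) = 0)
    (hPinternal : DirectSum.IsInternal grP)
    (hPone : (1 : P) ∈ grP 0)
    (hPmul : ∀ (d₁ d₂ : ℕ) (x y : P), x ∈ grP d₁ → y ∈ grP d₂ → x * y ∈ grP (d₁ + d₂))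
    (hPe : ∀ v, eP v ∈ grP 0)
    (hPχ : ∀ v w, χ v w ∈ grP 1)
    (hPfree : ∀ (S : Type) [Ring S] [Algebra K S] (ε : V → S) (γ : V → V → S),
      (∀ v w, ¬ G.Adj v w → γ v w = 0) →
      (∀ v, ε v * ε v = ε v) →
      (∀ v w, v ≠ w → ε v * ε w = 0) →
      (∑ v : V, ε v = 1) →
      (∀ v w, ε v * γ v w = γ v w ∧ γ v w * ε w = γ v w) →
      (∀ v : V,
        (∑ w : V, if ornt v w then γ v w * γ w v else 0) -
        (∑ w : V, if ornt w v then γ v w * γ w v else 0) = 0) →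
      ∃! f : P →ₐ[K] S, (∀ v, f (eP v) = ε v) ∧ (∀ v w, f (χ v w) = γ v w)) :
    ∃ φ : B ≃ₐ[K] P, ∀ s : ℕ,
      Submodule.map (φ : B →ₐ[K] P).toLinearMap (grB s) = grP s := by

  classical
  obtain ⟨r⟩ : Nonempty V := hG.isConnected.nonempty
  -- the alternating sign function coming from the bipartite structure of the tree
  let t : V → K := fun v => (-1 : K) ^ (G.dist r v)
  have ht2 : ∀ v, t v * t v = 1 := by
    intro v
    show ((-1 : K) ^ (G.dist r v)) * ((-1 : K) ^ (G.dist r v)) = 1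
    rw [← pow_add]
    exact Even.neg_one_pow ⟨G.dist r v, rfl⟩
  have htadj : ∀ u v, G.Adj u v → t v = - t u := by
    intro u v h
    show (-1 : K) ^ (G.dist r v) = -((-1 : K) ^ (G.dist r u))
    rcases treeDistAdj G hG r u v h with hd | hd
    · rw [← hd, pow_succ]; ring
    · rw [← hd, pow_succ]; ring
  -- signs attached to arrows
  let lam : Arr G → K := fun a => if ornt a.val.1 a.val.2 then 1 else t a.val.2
  have hlam2 : ∀ a, lam a * lam a = 1 := by
    intro a
    by_cases h : ornt a.val.1 a.val.2
    · simp [lam, h]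
    · simp [lam, h, ht2]
  have hmu : ∀ (u v : V) (h : G.Adj u v) (h' : G.Adj v u),
      lam ⟨(v, u), h'⟩ * lam ⟨(u, v), h⟩ = if ornt u v then t u else - t u := by
    intro u v h h'
    by_cases ho : ornt u v
    · have ho2 : ¬ ornt v u := hor2 u v ho
      simp [lam, ho, ho2]
    · have ho2 : ornt v u := ((hor u v).1 h).resolve_left ho
      have hta := htadj u v h
      simp [lam, ho, ho2, hta]
  -- images of the generators of B in P, and of the generators of P in B
  let ϑ : Arr G → P := fun a => lam a • χ a.val.2 a.val.1
  let γ : V → V → B := fun v w =>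
    if h : G.Adj v w then lam ⟨(w, v), h.symm⟩ • θ ⟨(w, v), h.symm⟩ else 0
  have arrEta : ∀ (a : Arr G) (h : G.Adj a.val.1 a.val.2),
      (⟨(a.val.1, a.val.2), h⟩ : Arr G) = a := fun a h => Subtype.ext rfl
  -- elementary properties of the pairing
  have hqp_ind : ∀ (φ : DualPair G → K) (q0 : CompPair G),
      quadPairing G K φ (indC G K q0) = - φ (dswap G q0) := by
    intro φ q0
    simp only [quadPairing, indC, mul_ite, mul_one, mul_zero, neg_inj]
    rw [Finset.sum_ite_eq' Finset.univ q0 (fun q => φ (dswap G q))]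
    simp
  have hqp_sub : ∀ (φ : DualPair G → K) (ψ1 ψ2 : CompPair G → K),
      quadPairing G K φ (ψ1 - ψ2) = quadPairing G K φ ψ1 - quadPairing G K φ ψ2 := by
    intro φ ψ1 ψ2
    simp only [quadPairing, Pi.sub_apply, mul_sub, Finset.sum_sub_distrib]
    ring
  have hqp_add : ∀ (φ : DualPair G → K) (ψ1 ψ2 : CompPair G → K),
      quadPairing G K φ (ψ1 + ψ2) = quadPairing G K φ ψ1 + quadPairing G K φ ψ2 := by
    intro φ ψ1 ψ2
    simp only [quadPairing, Pi.add_apply, mul_add, Finset.sum_add_distrib]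
    ring
  have hqp_smul : ∀ (φ : DualPair G → K) (a : K) (ψ : CompPair G → K),
      quadPairing G K φ (a • ψ) = a * quadPairing G K φ ψ := by
    intro φ a ψ
    simp only [quadPairing, Pi.smul_apply, smul_eq_mul, mul_neg, Finset.mul_sum]
    congr 1
    refine Finset.sum_congr rfl (fun q _ => by ring)
  have hqp_zero : ∀ (φ : DualPair G → K), quadPairing G K φ (0 : CompPair G → K) = 0 := by
    intro φ
    simp [quadPairing]
  -- Chunk A : the images ϑ satisfy the relations of B
  have hrelP : ∀ φ : DualPair G → K, (∀ ψ ∈ zigzagJ G K, quadPairing G K φ ψ = 0) →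
      ∑ q : DualPair G, φ q • (ϑ q.val.1 * ϑ q.val.2) = 0 := by
    intro φ hJ
    have hnl : ∀ (u v w : V) (h1 : G.Adj u v) (h2 : G.Adj v w), u ≠ w →
        φ ⟨(⟨(v, w), h2⟩, ⟨(u, v), h1⟩), rfl⟩ = 0 := by
      intro u v w h1 h2 hne
      have hmem : indC G K ⟨(⟨(u, v), h1⟩, ⟨(v, w), h2⟩), rfl⟩ ∈ zigzagJ G K :=
        Submodule.subset_span (Or.inl ⟨u, v, w, h1, h2, hne, rfl⟩)
      have h := hJ _ hmem
      erw [hqp_ind] at h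
      exact neg_eq_zero.mp h
    have hnl' : ∀ q : DualPair G, q.val.1.val ≠ (q.val.2.val.2, q.val.2.val.1) → φ q = 0 := by
      rintro ⟨⟨⟨⟨bu, bv⟩, hb⟩, ⟨⟨au, av⟩, ha⟩⟩, hq⟩ hne
      simp only at hq hne
      subst hq
      refine hnl au av bv ha hb ?_
      intro h
      subst h
      exact hne rfl
    have hcst : ∀ (v u w : V) (h1 : G.Adj v u) (h2 : G.Adj v w),
        φ (loopq G h2) = φ (loopq G h1) := by
      intro v u w h1 h2
      have hmem : (indC G K ⟨(⟨(v, w), h2⟩, ⟨(w, v), h2.symm⟩), rfl⟩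
          - indC G K ⟨(⟨(v, u), h1⟩, ⟨(u, v), h1.symm⟩), rfl⟩) ∈ zigzagJ G K :=
        Submodule.subset_span (Or.inr ⟨v, u, w, h1, h2, rfl⟩)
      have h := hJ _ hmem
      erw [hqp_sub, hqp_ind, hqp_ind] at h
      exact neg_inj.mp (sub_eq_zero.mp h)
    have hcex : ∀ (u : V), ∃ c : K, ∀ (w : V) (h2 : G.Adj u w), φ (loopq G h2) = c := by
      intro u
      by_cases hex : ∃ w, G.Adj u w
      · obtain ⟨w0, hw0⟩ := hex
        exact ⟨φ (loopq G hw0), fun w h2 => hcst u w0 w hw0 h2⟩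
      · exact ⟨0, fun w h2 => absurd ⟨w, h2⟩ hex⟩
    choose cφ hcφ using hcex
    have hmuL : ∀ (u w : V) (h : G.Adj u w),
        ϑ (loopq G h).val.1 * ϑ (loopq G h).val.2
          = (if ornt u w then t u else - t u) • (χ u w * χ w u) := by
      intro u w h
      show (lam ⟨(w, u), h.symm⟩ • χ u w) * (lam ⟨(u, w), h⟩ • χ w u) = _
      rw [smul_mul_smul_comm, hmu u w h h.symm]
    rw [sum_dualpair G (fun q => φ q • (ϑ q.val.1 * ϑ q.val.2))
        (fun q hq => by show φ q • _ = 0; rw [hnl' q hq, zero_smul])]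
    rw [Fintype.sum_prod_type]
    refine Finset.sum_eq_zero (fun u _ => ?_)
    have hterm : ∀ w : V,
        (if h : G.Adj u w then φ (loopq G h) • (ϑ (loopq G h).val.1 * ϑ (loopq G h).val.2)
            else 0)
          = (cφ u * t u) • ((if ornt u w then χ u w * χ w u else 0)
              - (if ornt w u then χ u w * χ w u else 0)) := by
      intro w
      by_cases hadj : G.Adj u w
      · rw [dif_pos hadj, hcφ u w hadj, hmuL u w hadj, smul_smul]
        by_cases ho : ornt u w
        · rw [if_pos ho, if_pos ho, if_neg (hor2 u w ho), sub_zero]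
        · have ho2 : ornt w u := ((hor u w).1 hadj).resolve_left ho
          rw [if_neg ho, if_neg ho, if_pos ho2, zero_sub, mul_neg, neg_smul, smul_neg]
      · have ho : ¬ ornt u w := fun hh => hadj ((hor u w).2 (Or.inl hh))
        have ho2 : ¬ ornt w u := fun hh => hadj ((hor u w).2 (Or.inr hh))
        rw [dif_neg hadj, if_neg ho, if_neg ho2, sub_zero, smul_zero]
    calc ∑ w : V, (if h : G.Adj (u, w).1 (u, w).2 then
            φ (loopq G h) • (ϑ (loopq G h).val.1 * ϑ (loopq G h).val.2) else 0)
        = ∑ w : V, (cφ u * t u) • ((if ornt u w then χ u w * χ w u else 0)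
            - (if ornt w u then χ u w * χ w u else 0)) :=
          Finset.sum_congr rfl (fun w _ => hterm w)
      _ = (cφ u * t u) • ((∑ w : V, if ornt u w then χ u w * χ w u else 0)
            - (∑ w : V, if ornt w u then χ u w * χ w u else 0)) := by
          rw [← Finset.smul_sum, Finset.sum_sub_distrib]
      _ = 0 := by rw [hPrel u, smul_zero]
  -- Chunk B : the images γ satisfy the relations of P
  have hrelB : ∀ v : V,
      (∑ w : V, if ornt v w then γ v w * γ w v else 0) -
      (∑ w : V, if ornt w v then γ v w * γ w v else 0) = 0 := by
    intro v
    -- the canonical element of J^⊥ concentrated at v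
    set φv : DualPair G → K := fun q =>
      if q.val.2.val.1 = v ∧ q.val.1.val = (q.val.2.val.2, q.val.2.val.1) then 1 else 0
      with hφv_def
    have hφvJ : ∀ ψ ∈ zigzagJ G K, quadPairing G K φv ψ = 0 := by
      intro ψ hψ
      induction hψ using Submodule.span_induction with
      | mem ψ hmem =>
        rcases hmem with ⟨u, v', w, h1, h2, hne, rfl⟩ | ⟨v', u, w, h1, h2, rfl⟩
        · erw [hqp_ind]
          simp [hφv_def, dswap, Prod.ext_iff, Ne.symm hne]
        · erw [hqp_sub, hqp_ind, hqp_ind]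
          by_cases hv : v' = v <;> simp [hφv_def, dswap, Prod.ext_iff, hv]
      | zero => exact hqp_zero φv
      | add x y _ _ hx hy => rw [hqp_add, hx, hy, add_zero]
      | smul a x _ hx => rw [hqp_smul, hx, mul_zero]
    have hSv := hBrel φv hφvJ
    rw [sum_dualpair G (fun q => φv q • (θ q.val.1 * θ q.val.2))
        (fun q hq => by
          have h0 : φv q = 0 := if_neg (fun hc => hq hc.2)
          show φv q • _ = 0; rw [h0, zero_smul])] at hSv
    rw [Fintype.sum_prod_type] at hSv
    have hφvloop : ∀ (u w : V) (h : G.Adj u w), φv (loopq G h) = if u = v then (1:K) else 0 := by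
      intro u w h
      simp [hφv_def, loopq]
    have hrow : ∀ u : V, (∑ w : V, if h : G.Adj (u, w).1 (u, w).2 then
          φv (loopq G h) • (θ (loopq G h).val.1 * θ (loopq G h).val.2) else 0)
        = if u = v then (∑ w : V, if h : G.Adj u w then
            θ (loopq G h).val.1 * θ (loopq G h).val.2 else 0) else 0 := by
      intro u
      by_cases hu : u = v
      · rw [if_pos hu]
        refine Finset.sum_congr rfl (fun w _ => ?_)
        by_cases hadj : G.Adj u w
        · rw [dif_pos hadj, dif_pos hadj, hφvloop u w hadj, if_pos hu, one_smul]
        · rw [dif_neg hadj, dif_neg hadj]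
      · rw [if_neg hu]
        refine Finset.sum_eq_zero (fun w _ => ?_)
        by_cases hadj : G.Adj u w
        · rw [dif_pos hadj, hφvloop u w hadj, if_neg hu, zero_smul]
        · rw [dif_neg hadj]
    rw [Finset.sum_congr rfl (fun u _ => hrow u),
      Finset.sum_ite_eq' Finset.univ v
        (fun u => ∑ w : V, if h : G.Adj u w then
          θ (loopq G h).val.1 * θ (loopq G h).val.2 else 0)] at hSv
    simp only [Finset.mem_univ, if_true] at hSv
    -- now hSv : ∑ w, (if h : G.Adj v w then θ .. * θ .. else 0) = 0
    have hterm : ∀ w : V,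
        (if ornt v w then γ v w * γ w v else 0) - (if ornt w v then γ v w * γ w v else 0)
          = t v • (if h : G.Adj v w then
              θ (loopq G h).val.1 * θ (loopq G h).val.2 else 0) := by
      intro w
      by_cases hadj : G.Adj v w
      · have hγγ : γ v w * γ w v
            = (if ornt v w then t v else - t v)
              • (θ (loopq G hadj).val.1 * θ (loopq G hadj).val.2) := by
          show (if h : G.Adj v w then lam ⟨(w, v), h.symm⟩ • θ ⟨(w, v), h.symm⟩ else 0)
              * (if h : G.Adj w v then lam ⟨(v, w), h.symm⟩ • θ ⟨(v, w), h.symm⟩ else 0) = _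
          rw [dif_pos hadj, dif_pos hadj.symm, smul_mul_smul_comm,
            hmu v w hadj.symm.symm hadj.symm]
          rfl
        by_cases ho : ornt v w
        · rw [if_pos ho, if_neg (hor2 v w ho), hγγ, if_pos ho, sub_zero, dif_pos hadj]
        · have ho2 : ornt w v := ((hor v w).1 hadj).resolve_left ho
          rw [if_neg ho, if_pos ho2, hγγ, if_neg ho, zero_sub, neg_smul, neg_neg,
            dif_pos hadj]
      · have ho : ¬ ornt v w := fun hh => hadj ((hor v w).2 (Or.inl hh))
        have ho2 : ¬ ornt w v := fun hh => hadj ((hor v w).2 (Or.inr hh))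
        rw [if_neg ho, if_neg ho2, sub_zero, dif_neg hadj, smul_zero]
    calc (∑ w : V, if ornt v w then γ v w * γ w v else 0) -
        (∑ w : V, if ornt w v then γ v w * γ w v else 0)
        = ∑ w : V, ((if ornt v w then γ v w * γ w v else 0)
            - (if ornt w v then γ v w * γ w v else 0)) := (Finset.sum_sub_distrib _ _).symm
      _ = ∑ w : V, t v • (if h : G.Adj v w then
            θ (loopq G h).val.1 * θ (loopq G h).val.2 else 0) :=
          Finset.sum_congr rfl (fun w _ => hterm w)
      _ = t v • ∑ w : V, (if h : G.Adj v w then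
            θ (loopq G h).val.1 * θ (loopq G h).val.2 else 0) := (Finset.smul_sum).symm
      _ = 0 := by rw [hSv, smul_zero]
  -- build f : B →ₐ[K] P
  have hϑcomp : ∀ a : Arr G, eP a.val.2 * ϑ a = ϑ a ∧ ϑ a * eP a.val.1 = ϑ a := by
    intro a
    constructor
    · show eP a.val.2 * (lam a • χ a.val.2 a.val.1) = lam a • χ a.val.2 a.val.1
      rw [mul_smul_comm, (hPcomp a.val.2 a.val.1).1]
    · show (lam a • χ a.val.2 a.val.1) * eP a.val.1 = lam a • χ a.val.2 a.val.1
      rw [smul_mul_assoc, (hPcomp a.val.2 a.val.1).2]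
  obtain ⟨f, ⟨hfe, hfθ⟩, _⟩ := hBfree P eP ϑ hPidem hPorth hPsum hϑcomp hrelP
  -- build g : P →ₐ[K] B
  have hγ0 : ∀ v w, ¬ G.Adj v w → γ v w = 0 := fun v w h => dif_neg h
  have hγcomp : ∀ v w, eB v * γ v w = γ v w ∧ γ v w * eB w = γ v w := by
    intro v w
    by_cases h : G.Adj v w
    · constructor
      · show eB v * (if h : G.Adj v w then lam ⟨(w, v), h.symm⟩ • θ ⟨(w, v), h.symm⟩ else 0)
            = (if h : G.Adj v w then lam ⟨(w, v), h.symm⟩ • θ ⟨(w, v), h.symm⟩ else 0)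
        rw [dif_pos h, mul_smul_comm]
        have hb : eB v * θ ⟨(w, v), h.symm⟩ = θ ⟨(w, v), h.symm⟩ := (hBcomp ⟨(w, v), h.symm⟩).1
        rw [hb]
      · show (if h : G.Adj v w then lam ⟨(w, v), h.symm⟩ • θ ⟨(w, v), h.symm⟩ else 0) * eB w
            = (if h : G.Adj v w then lam ⟨(w, v), h.symm⟩ • θ ⟨(w, v), h.symm⟩ else 0)
        rw [dif_pos h, smul_mul_assoc]
        have hb : θ ⟨(w, v), h.symm⟩ * eB w = θ ⟨(w, v), h.symm⟩ := (hBcomp ⟨(w, v), h.symm⟩).2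
        rw [hb]
    · have h0 : γ v w = 0 := dif_neg h
      rw [h0, mul_zero, zero_mul]; exact ⟨rfl, rfl⟩
  obtain ⟨g, ⟨hge, hgχ⟩, _⟩ := hPfree B eB γ hγ0 hBidem hBorth hBsum hγcomp hrelB
  -- g ∘ f = id
  obtain ⟨fB0, _, hBuniq⟩ := hBfree B eB θ hBidem hBorth hBsum hBcomp hBrel
  have hgfcomp : g.comp f = AlgHom.id K B := by
    have h1 : g.comp f = fB0 := by
      refine hBuniq _ ⟨fun v => ?_, fun a => ?_⟩
      · show g (f (eB v)) = eB v
        rw [hfe v, hge v]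
      · show g (f (θ a)) = θ a
        rw [hfθ a]
        show g (lam a • χ a.val.2 a.val.1) = θ a
        rw [map_smul, hgχ]
        have hadj : G.Adj a.val.2 a.val.1 := a.prop.symm
        show lam a • (if h : G.Adj a.val.2 a.val.1 then
            lam ⟨(a.val.1, a.val.2), h.symm⟩ • θ ⟨(a.val.1, a.val.2), h.symm⟩ else 0) = θ a
        rw [dif_pos hadj, smul_smul, arrEta a hadj.symm, hlam2 a, one_smul]
    have h2 : AlgHom.id K B = fB0 := hBuniq _ ⟨fun v => rfl, fun a => rfl⟩
    rw [h1, h2]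
  -- f ∘ g = id
  obtain ⟨fP0, _, hPuniq⟩ := hPfree P eP χ hχ0 hPidem hPorth hPsum hPcomp hPrel
  have hfgcomp : f.comp g = AlgHom.id K P := by
    have h1 : f.comp g = fP0 := by
      refine hPuniq _ ⟨fun v => ?_, fun v w => ?_⟩
      · show f (g (eP v)) = eP v
        rw [hge v, hfe v]
      · show f (g (χ v w)) = χ v w
        rw [hgχ]
        by_cases hadj : G.Adj v w
        · show f (if h : G.Adj v w then lam ⟨(w, v), h.symm⟩ • θ ⟨(w, v), h.symm⟩ else 0)
              = χ v w
          rw [dif_pos hadj, map_smul, hfθ ⟨(w, v), hadj.symm⟩]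
          show lam ⟨(w, v), hadj.symm⟩ • (lam ⟨(w, v), hadj.symm⟩ • χ v w) = χ v w
          rw [smul_smul, hlam2 ⟨(w, v), hadj.symm⟩, one_smul]
        · show f (if h : G.Adj v w then lam ⟨(w, v), h.symm⟩ • θ ⟨(w, v), h.symm⟩ else 0)
              = χ v w
          rw [dif_neg hadj, map_zero, hχ0 v w hadj]
    have h2 : AlgHom.id K P = fP0 := hPuniq _ ⟨fun v => rfl, fun v w => rfl⟩
    rw [h1, h2]
  have hgf : ∀ x : B, g (f x) = x := fun x => congrArg (fun h : B →ₐ[K] B => h x) hgfcomp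
  have hfg : ∀ x : P, f (g x) = x := fun x => congrArg (fun h : P →ₐ[K] P => h x) hfgcomp
  -- the zero-extended arrows of B
  let ϑB : V → V → B := fun v w => if h : G.Adj v w then θ ⟨(w, v), h.symm⟩ else 0
  have hϑBcomp : ∀ v w, eB v * ϑB v w = ϑB v w ∧ ϑB v w * eB w = ϑB v w := by
    intro v w
    by_cases h : G.Adj v w
    · have h1 : ϑB v w = θ ⟨(w, v), h.symm⟩ := dif_pos h
      rw [h1]
      exact ⟨(hBcomp ⟨(w, v), h.symm⟩).1, (hBcomp ⟨(w, v), h.symm⟩).2⟩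
    · have h1 : ϑB v w = 0 := dif_neg h
      rw [h1, mul_zero, zero_mul]; exact ⟨rfl, rfl⟩
  have hϑBgr : ∀ v w, ϑB v w ∈ grB 1 := by
    intro v w
    by_cases h : G.Adj v w
    · have h1 : ϑB v w = θ ⟨(w, v), h.symm⟩ := dif_pos h
      rw [h1]; exact hBθ _
    · have h1 : ϑB v w = 0 := dif_neg h
      rw [h1]; exact zero_mem _
  -- B is generated by its idempotents and arrows
  have hgenB : ∀ x : B, x ∈ Algebra.adjoin K (Set.range eB ∪ {x | ∃ v w, x = ϑB v w}) := by
    intro x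
    set S := Algebra.adjoin K (Set.range eB ∪ {x | ∃ v w, x = ϑB v w}) with hS
    let ε' : V → S := fun v => ⟨eB v, Algebra.subset_adjoin (Or.inl ⟨v, rfl⟩)⟩
    have hθmem : ∀ a : Arr G, (θ a : B) ∈ S := by
      intro a
      refine Algebra.subset_adjoin (Or.inr ⟨a.val.2, a.val.1, ?_⟩)
      show θ a = (if h : G.Adj a.val.2 a.val.1 then θ ⟨(a.val.1, a.val.2), h.symm⟩ else 0)
      rw [dif_pos a.prop.symm, arrEta a _]
    let θ' : Arr G → S := fun a => ⟨θ a, hθmem a⟩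
    have h1 : ∀ v, ε' v * ε' v = ε' v := fun v => Subtype.ext (hBidem v)
    have h2 : ∀ v w, v ≠ w → ε' v * ε' w = 0 := fun v w h => Subtype.ext (hBorth v w h)
    have h3 : ∑ v : V, ε' v = 1 := by
      apply Subtype.ext
      rw [AddSubmonoidClass.coe_finset_sum]
      exact hBsum
    have h4 : ∀ a : Arr G, ε' a.val.2 * θ' a = θ' a ∧ θ' a * ε' a.val.1 = θ' a :=
      fun a => ⟨Subtype.ext (hBcomp a).1, Subtype.ext (hBcomp a).2⟩
    have h5 : ∀ φ : DualPair G → K, (∀ ψ ∈ zigzagJ G K, quadPairing G K φ ψ = 0) →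
        ∑ q : DualPair G, φ q • (θ' q.val.1 * θ' q.val.2) = 0 := by
      intro φ hJ
      apply Subtype.ext
      rw [AddSubmonoidClass.coe_finset_sum]
      have : ∀ q : DualPair G, ((φ q • (θ' q.val.1 * θ' q.val.2) : S) : B)
          = φ q • (θ q.val.1 * θ q.val.2) := fun q => rfl
      rw [Finset.sum_congr rfl (fun q _ => this q)]
      exact hBrel φ hJ
    obtain ⟨fS, ⟨hfSe, hfSθ⟩, _⟩ := hBfree S ε' θ' h1 h2 h3 h4 h5
    have hcomp1 : S.val.comp fS = fB0 := by
      refine hBuniq _ ⟨fun v => ?_, fun a => ?_⟩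
      · show (fS (eB v) : B) = eB v
        rw [hfSe v]
      · show (fS (θ a) : B) = θ a
        rw [hfSθ a]
    have hid2 : AlgHom.id K B = fB0 := hBuniq _ ⟨fun v => rfl, fun a => rfl⟩
    have hx : (fS x : B) = x :=
      congrArg (fun h : B →ₐ[K] B => h x) (hcomp1.trans hid2.symm)
    rw [← hx]
    exact (fS x).2
  -- P is generated by its idempotents and arrows
  have hgenP : ∀ x : P, x ∈ Algebra.adjoin K (Set.range eP ∪ {x | ∃ v w, x = χ v w}) := by
    intro x
    set S := Algebra.adjoin K (Set.range eP ∪ {x | ∃ v w, x = χ v w}) with hS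
    let ε' : V → S := fun v => ⟨eP v, Algebra.subset_adjoin (Or.inl ⟨v, rfl⟩)⟩
    let χ' : V → V → S := fun v w => ⟨χ v w, Algebra.subset_adjoin (Or.inr ⟨v, w, rfl⟩)⟩
    have h0 : ∀ v w, ¬ G.Adj v w → χ' v w = 0 := fun v w h => Subtype.ext (hχ0 v w h)
    have h1 : ∀ v, ε' v * ε' v = ε' v := fun v => Subtype.ext (hPidem v)
    have h2 : ∀ v w, v ≠ w → ε' v * ε' w = 0 := fun v w h => Subtype.ext (hPorth v w h)
    have h3 : ∑ v : V, ε' v = 1 := by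
      apply Subtype.ext
      rw [AddSubmonoidClass.coe_finset_sum]
      exact hPsum
    have h4 : ∀ v w, ε' v * χ' v w = χ' v w ∧ χ' v w * ε' w = χ' v w :=
      fun v w => ⟨Subtype.ext (hPcomp v w).1, Subtype.ext (hPcomp v w).2⟩
    have h5 : ∀ v : V,
        (∑ w : V, if ornt v w then χ' v w * χ' w v else 0) -
        (∑ w : V, if ornt w v then χ' v w * χ' w v else 0) = 0 := by
      intro v
      apply Subtype.ext
      have hite : ∀ (c : Prop) [Decidable c] (y : S),
          ((if c then y else 0 : S) : P) = if c then (y : P) else 0 := by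
        intro c _ y
        split <;> rfl
      rw [AddSubgroupClass.coe_sub, AddSubmonoidClass.coe_finset_sum,
        AddSubmonoidClass.coe_finset_sum]
      rw [Finset.sum_congr rfl (fun w _ => hite (ornt v w) (χ' v w * χ' w v)),
        Finset.sum_congr rfl (fun w _ => hite (ornt w v) (χ' v w * χ' w v))]
      exact hPrel v
    obtain ⟨fS, ⟨hfSe, hfSχ⟩, _⟩ := hPfree S ε' χ' h0 h1 h2 h3 h4 h5
    have hcomp1 : S.val.comp fS = fP0 := by
      refine hPuniq _ ⟨fun v => ?_, fun v w => ?_⟩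
      · show (fS (eP v) : P) = eP v
        rw [hfSe v]
      · show (fS (χ v w) : P) = χ v w
        rw [hfSχ v w]
    have hid2 : AlgHom.id K P = fP0 := hPuniq _ ⟨fun v => rfl, fun v w => rfl⟩
    have hx : (fS x : P) = x :=
      congrArg (fun h : P →ₐ[K] P => h x) (hcomp1.trans hid2.symm)
    rw [← hx]
    exact (fS x).2
  -- graded pieces
  obtain ⟨WB, hWB0, hWBs, hWBeq⟩ := gradedPieces K B eB ϑB grB hBidem hBorth hBsum
    hϑBcomp hBinternal hBmul hBe hϑBgr hgenB
  obtain ⟨WP, hWP0, hWPs, hWPeq⟩ := gradedPieces K P eP χ grP hPidem hPorth hPsum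
    hPcomp hPinternal hPmul hPe hPχ hgenP
  -- f and g respect the graded pieces
  have hfW : ∀ s, ∀ x ∈ WB s, f x ∈ WP s := by
    intro s
    induction s with
    | zero =>
      intro x hx
      rw [hWB0] at hx
      rw [hWP0]
      induction hx using Submodule.span_induction with
      | mem x hx =>
        obtain ⟨v, rfl⟩ := hx
        rw [hfe v]; exact Submodule.subset_span ⟨v, rfl⟩
      | zero => rw [map_zero]; exact zero_mem _
      | add a b _ _ ha hb => rw [map_add]; exact add_mem ha hb
      | smul k a _ ha => rw [map_smul]; exact Submodule.smul_mem _ _ ha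
    | succ s ih =>
      intro x hx
      rw [hWBs] at hx
      rw [hWPs]
      induction hx using Submodule.span_induction with
      | mem x hx =>
        obtain ⟨v, w, y, hy, rfl⟩ := hx
        rw [map_mul]
        by_cases hadj : G.Adj v w
        · have hB : ϑB v w = θ ⟨(w, v), hadj.symm⟩ := dif_pos hadj
          rw [hB, hfθ ⟨(w, v), hadj.symm⟩]
          show (lam ⟨(w, v), hadj.symm⟩ • χ v w) * f y ∈ _
          rw [smul_mul_assoc]
          exact Submodule.smul_mem _ _ (Submodule.subset_span ⟨v, w, f y, ih y hy, rfl⟩)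
        · have hB : ϑB v w = 0 := dif_neg hadj
          rw [hB, map_zero, zero_mul]; exact zero_mem _
      | zero => rw [map_zero]; exact zero_mem _
      | add a b _ _ ha hb => rw [map_add]; exact add_mem ha hb
      | smul k a _ ha => rw [map_smul]; exact Submodule.smul_mem _ _ ha
  have hgW : ∀ s, ∀ x ∈ WP s, g x ∈ WB s := by
    intro s
    induction s with
    | zero =>
      intro x hx
      rw [hWP0] at hx
      rw [hWB0]
      induction hx using Submodule.span_induction with
      | mem x hx =>
        obtain ⟨v, rfl⟩ := hx
        rw [hge v]; exact Submodule.subset_span ⟨v, rfl⟩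
      | zero => rw [map_zero]; exact zero_mem _
      | add a b _ _ ha hb => rw [map_add]; exact add_mem ha hb
      | smul k a _ ha => rw [map_smul]; exact Submodule.smul_mem _ _ ha
    | succ s ih =>
      intro x hx
      rw [hWPs] at hx
      rw [hWBs]
      induction hx using Submodule.span_induction with
      | mem x hx =>
        obtain ⟨v, w, y, hy, rfl⟩ := hx
        rw [map_mul, hgχ]
        by_cases hadj : G.Adj v w
        · have hB : γ v w = lam ⟨(w, v), hadj.symm⟩ • ϑB v w := by
            show (if h : G.Adj v w then lam ⟨(w, v), h.symm⟩ • θ ⟨(w, v), h.symm⟩ else 0)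
                = lam ⟨(w, v), hadj.symm⟩
                  • (if h : G.Adj v w then θ ⟨(w, v), h.symm⟩ else 0)
            rw [dif_pos hadj, dif_pos hadj]
          rw [hB, smul_mul_assoc]
          exact Submodule.smul_mem _ _ (Submodule.subset_span ⟨v, w, g y, ih y hy, rfl⟩)
        · have hB : γ v w = 0 := dif_neg hadj
          rw [hB, zero_mul]; exact zero_mem _
      | zero => rw [map_zero]; exact zero_mem _
      | add a b _ _ ha hb => rw [map_add]; exact add_mem ha hb
      | smul k a _ ha => rw [map_smul]; exact Submodule.smul_mem _ _ ha
  -- assemble the isomorphism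
  refine ⟨AlgEquiv.ofAlgHom f g hfgcomp hgfcomp, ?_⟩
  intro s
  rw [hWBeq s, hWPeq s]
  apply le_antisymm
  · rintro _ ⟨x, hx, rfl⟩
    exact hfW s x hx
  · intro x hx
    exact ⟨g x, hgW s x hx, hfg x⟩
end
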